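/- arXiv:1807.11044 — 7 statements merged into one kernel-verified Lean document; each statement's English description precedes it below -/
import Mathlib

section
/- Let R be a commutative ring, L a finitely generated projective R-module, E a finitely generated projective R-module, and ⟨·,·⟩ : E × E → L an R-bilinear form which is alternating (⟨e,e⟩ = 0 for all e ∈ E) and perfect (the R-linear map E → Hom_R(E, L), e ↦ ⟨·, e⟩, is bijective). Let F be a direct summand of E. Then the R-linear map E → Hom_R(F, L) sending e to the restriction of ⟨·, e⟩ to F is surjective, its kernel equals F^⊥ := {e ∈ E : ⟨f, e⟩ = 0 for all f ∈ F}, and F^⊥ is a direct summand of E. -/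
/-- The orthogonal `F^⊥` of a submodule `F` with respect to an `L`-valued
bilinear form `B` on `E`: the set of `e : E` with `B f e = 0` for all `f ∈ F`. -/
def Bilin.perp {R E L : Type*} [CommRing R] [AddCommGroup E] [Module R E]
    [AddCommGroup L] [Module R L] (B : E →ₗ[R] E →ₗ[R] L) (F : Submodule R E) :
    Submodule R E where
  carrier := {e | ∀ f ∈ F, B f e = 0}
  add_mem' := by
    intro a b ha hb f hf
    simp [map_add, ha f hf, hb f hf]
  zero_mem' := by
    intro f hf
    simp
  smul_mem' := by
    intro c x hx f hf
    simp [map_smul, hx f hf]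

/-- for a perfect alternating `L`-valued bilinear form on a finitely
generated projective module `E` and a direct summand `F` of `E`, the map
`e ↦ ⟨·, e⟩|_F` from `E` to `Hom_R(F, L)` is surjective, its kernel is `F^⊥`,
and `F^⊥` is a direct summand of `E`. -/
theorem statement0 {R E L : Type*} [CommRing R]
    [AddCommGroup E] [Module R E] [AddCommGroup L] [Module R L]
    [Module.Finite R E] [Module.Projective R E]
    [Module.Finite R L] [Module.Projective R L]
    (B : E →ₗ[R] E →ₗ[R] L)
    (halt : ∀ e : E, B e e = 0)
    (hperf : Function.Bijective ⇑B.flip)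
    (F : Submodule R E) (hF : ∃ G : Submodule R E, IsCompl F G) :
    Function.Surjective ⇑(B.flip.compl₂ F.subtype) ∧
    LinearMap.ker (B.flip.compl₂ F.subtype) = Bilin.perp B F ∧
    ∃ G' : Submodule R E, IsCompl (Bilin.perp B F) G' := by
  obtain ⟨G, hG⟩ := hF
  set π : E →ₗ[R] F := F.projectionOnto G hG
  set Beq := LinearEquiv.ofBijective B.flip hperf
  set g : (F →ₗ[R] L) →ₗ[R] E :=
    Beq.symm.toLinearMap ∘ₗ LinearMap.lcomp R L π
  set Φ := B.flip.compl₂ F.subtype with hΦ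
  have hsec : ∀ φ : F →ₗ[R] L, Φ (g φ) = φ := by
    intro φ
    ext f
    have h1 : B.flip (g φ) = φ ∘ₗ π := by
      show B.flip (Beq.symm (φ ∘ₗ π)) = φ ∘ₗ π
      exact Beq.apply_symm_apply _
    have : Φ (g φ) f = B.flip (g φ) (f : E) := rfl
    rw [this, h1]
    simp [π, Submodule.projectionOnto_apply_left]
  have hsurj : Function.Surjective ⇑Φ := fun φ => ⟨g φ, hsec φ⟩
  have hker : LinearMap.ker Φ = Bilin.perp B F := by
    ext e
    constructor
    · intro he f hf
      have := LinearMap.congr_fun (LinearMap.mem_ker.mp he) ⟨f, hf⟩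
      simpa [hΦ] using this
    · intro he
      rw [LinearMap.mem_ker]
      ext f
      simpa [hΦ] using he f f.2
  refine ⟨hsurj, hker, ⟨LinearMap.range g, ?_⟩⟩
  rw [← hker]
  constructor
  · rw [disjoint_iff_inf_le]
    rintro x ⟨hx, φ, rfl⟩
    have : φ = 0 := by rw [← hsec φ]; exact hx
    simp [this]
  · rw [codisjoint_iff_le_sup]
    intro x _
    have hx1 : x - g (Φ x) ∈ LinearMap.ker Φ := by
      simp [map_sub, hsec (Φ x)]
    have : x = (x - g (Φ x)) + g (Φ x) := by abel
    rw [this]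
    exact Submodule.add_mem_sup hx1 ⟨Φ x, rfl⟩
end

section
/- Let g ≥ 1 and let M be a positive definite Hermitian complex g×g matrix; define H(v,w) := conj(v)ᵀ M w and E(v,w) := Im H(v,w) for v, w ∈ ℂ^g. Suppose γ₁, …, γ_g, δ₁, …, δ_g ∈ ℂ^g satisfy E(γᵢ, γⱼ) = 0, E(δᵢ, δⱼ) = 0, and E(γᵢ, δⱼ) = δᵢⱼ (Kronecker delta) for all 1 ≤ i, j ≤ g. Then (γ₁, …, γ_g) is a basis of ℂ^g over ℂ, and the unique complex g×g matrix τ determined by δⱼ = Σᵢ τᵢⱼ γᵢ for all j satisfies τᵀ = τ and Im τ is positive definite, i.e. τ ∈ H_g. -/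
open Matrix
open scoped ComplexOrder

lemma hm_sum_left {g : ℕ} (M : Matrix (Fin g) (Fin g) ℂ) (c : Fin g → ℂ)
    (v : Fin g → (Fin g → ℂ)) (w : Fin g → ℂ) :
    star (∑ i, c i • v i) ⬝ᵥ M.mulVec w
      = ∑ i, (starRingEnd ℂ) (c i) * (star (v i) ⬝ᵥ M.mulVec w) := by
  simp only [dotProduct, Pi.star_apply, Finset.sum_apply, Pi.smul_apply, smul_eq_mul,
    star_sum, star_mul', Finset.sum_mul, Finset.mul_sum, starRingEnd_apply]
  rw [Finset.sum_comm]
  exact Finset.sum_congr rfl fun i _ => Finset.sum_congr rfl fun j _ => by ring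

lemma hm_sum_right {g : ℕ} (M : Matrix (Fin g) (Fin g) ℂ) (c : Fin g → ℂ)
    (v : Fin g → ℂ) (w : Fin g → (Fin g → ℂ)) :
    star v ⬝ᵥ M.mulVec (∑ i, c i • w i)
      = ∑ i, c i * (star v ⬝ᵥ M.mulVec (w i)) := by
  have : M.mulVec (∑ i, c i • w i) = ∑ i, c i • M.mulVec (w i) := by
    rw [show M.mulVec (∑ i, c i • w i) = M.mulVecLin (∑ i, c i • w i) from rfl, map_sum]
    simp
  rw [this]
  simp only [dotProduct, Finset.sum_apply, Pi.smul_apply, smul_eq_mul, Finset.mul_sum]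
  rw [Finset.sum_comm]
  exact Finset.sum_congr rfl fun i _ => Finset.sum_congr rfl fun j _ => by ring

lemma herm_swap {g : ℕ} (M : Matrix (Fin g) (Fin g) ℂ) (hM : M.IsHermitian) (v w : Fin g → ℂ) :
    star w ⬝ᵥ M.mulVec v = (starRingEnd ℂ) (star v ⬝ᵥ M.mulVec w) := by
  rw [starRingEnd_apply, show star v ⬝ᵥ M.mulVec w = star (star (M.mulVec w) ⬝ᵥ v) from
    star_dotProduct _ _, star_star, star_mulVec, ← dotProduct_mulVec, hM]

lemma real_indep {g : ℕ} (M : Matrix (Fin g) (Fin g) ℂ)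
    (γ δ : Fin g → (Fin g → ℂ))
    (h3 : ∀ i j, Complex.im (star (γ i) ⬝ᵥ M.mulVec (δ j)) = if i = j then 1 else 0)
    (x : Fin g → ℝ) (hx : ∑ i, (x i : ℂ) • γ i = 0) : x = 0 := by
  funext j
  have h0 : star (∑ i, (x i : ℂ) • γ i) ⬝ᵥ M.mulVec (δ j) = 0 := by rw [hx]; simp
  rw [hm_sum_left] at h0
  have h0' := congrArg Complex.im h0
  rw [Complex.im_sum] at h0'
  have he : ∀ i, ((starRingEnd ℂ) ((x i : ℂ)) * (star (γ i) ⬝ᵥ M.mulVec (δ j))).im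
      = x i * (if i = j then 1 else 0) := fun i => by
    rw [Complex.conj_ofReal, Complex.mul_im, h3]; simp
  rw [Finset.sum_congr rfl (fun i _ => he i)] at h0'
  simpa using h0'

lemma hm_real {g : ℕ} (M : Matrix (Fin g) (Fin g) ℂ) (γ : Fin g → (Fin g → ℂ))
    (h1 : ∀ i j, Complex.im (star (γ i) ⬝ᵥ M.mulVec (γ j)) = 0) (x y : Fin g → ℝ) :
    (star (∑ i, (x i : ℂ) • γ i) ⬝ᵥ M.mulVec (∑ i, (y i : ℂ) • γ i)).im = 0 := by
  rw [hm_sum_left, Complex.im_sum]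
  refine Finset.sum_eq_zero fun k _ => ?_
  rw [hm_sum_right, Complex.conj_ofReal, Complex.mul_im, Complex.ofReal_im, Complex.ofReal_re,
    Complex.im_sum]
  have : ∀ i, ((y i : ℂ) * (star (γ k) ⬝ᵥ M.mulVec (γ i))).im = 0 := fun i => by
    rw [Complex.mul_im, h1, Complex.ofReal_im]; ring
  rw [Finset.sum_congr rfl (fun i _ => this i)]
  simp

lemma gamma_indep {g : ℕ} (M : Matrix (Fin g) (Fin g) ℂ) (hM : M.PosDef)
    (γ δ : Fin g → (Fin g → ℂ))
    (h1 : ∀ i j, Complex.im (star (γ i) ⬝ᵥ M.mulVec (γ j)) = 0)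
    (h3 : ∀ i j, Complex.im (star (γ i) ⬝ᵥ M.mulVec (δ j)) = if i = j then 1 else 0) :
    LinearIndependent ℂ γ := by
  rw [Fintype.linearIndependent_iff]
  intro c hc
  have hsplit : (∑ i, ((c i).re : ℂ) • γ i)
      = (-Complex.I) • ∑ i, ((c i).im : ℂ) • γ i := by
    have h0 : (∑ i, ((c i).re : ℂ) • γ i) + Complex.I • ∑ i, ((c i).im : ℂ) • γ i = 0 := by
      rw [Finset.smul_sum, ← Finset.sum_add_distrib, ← hc]
      refine Finset.sum_congr rfl fun i _ => ?_
      rw [smul_smul, ← add_smul]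
      congr 1
      rw [mul_comm]
      exact Complex.re_add_im (c i)
    rw [neg_smul]
    exact eq_neg_of_add_eq_zero_left h0
  have him1 := hm_real M γ h1 (fun i => (c i).re) (fun i => (c i).re)
  have him2 := hm_real M γ h1 (fun i => (c i).im) (fun i => (c i).re)
  have hstar : star (∑ i, ((c i).re : ℂ) • γ i)
      = Complex.I • star (∑ i, ((c i).im : ℂ) • γ i) := by
    rw [hsplit, star_smul]
    simp
  have hmul : star (∑ i, ((c i).re : ℂ) • γ i) ⬝ᵥ M.mulVec (∑ i, ((c i).re : ℂ) • γ i)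
      = Complex.I * (star (∑ i, ((c i).im : ℂ) • γ i) ⬝ᵥ
          M.mulVec (∑ i, ((c i).re : ℂ) • γ i)) := by
    rw [hstar, smul_dotProduct, smul_eq_mul]
  have huu0 : star (∑ i, ((c i).re : ℂ) • γ i) ⬝ᵥ M.mulVec (∑ i, ((c i).re : ℂ) • γ i) = 0 := by
    refine Complex.ext ?_ (by simpa using him1)
    rw [hmul, Complex.mul_re, Complex.I_re, Complex.I_im]
    simpa using him2
  have hu0 : (∑ i, ((c i).re : ℂ) • γ i) = 0 := by
    by_contra h
    exact (hM.dotProduct_mulVec_pos h).ne' huu0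
  have hw0 : (∑ i, ((c i).im : ℂ) • γ i) = 0 := by
    rw [hu0] at hsplit
    have h2 := congrArg (fun v => Complex.I • v) hsplit.symm
    simpa [smul_smul, Complex.I_mul_I] using h2
  have hre0 := real_indep M γ δ h3 (fun i => (c i).re) hu0
  have him0 := real_indep M γ δ h3 (fun i => (c i).im) hw0
  intro i
  exact Complex.ext (by simpa using congrFun hre0 i) (by simpa using congrFun him0 i)

/-- Riemann bilinear relations: if `M` is a positive definite Hermitian
matrix, `E(v,w) = Im(conj(v)ᵀ M w)`, and `γ₁, …, γ_g, δ₁, …, δ_g` form a symplectic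
family for `E`, then `(γ₁, …, γ_g)` is a basis of `ℂ^g` and the unique matrix `τ`
with `δⱼ = Σᵢ τᵢⱼ γᵢ` is symmetric with positive definite imaginary part. -/
theorem statement6 (g : ℕ) (hg : 1 ≤ g)
    (M : Matrix (Fin g) (Fin g) ℂ) (hM : M.PosDef)
    (γ δ : Fin g → (Fin g → ℂ))
    (h1 : ∀ i j, Complex.im (star (γ i) ⬝ᵥ M.mulVec (γ j)) = 0)
    (h2 : ∀ i j, Complex.im (star (δ i) ⬝ᵥ M.mulVec (δ j)) = 0)
    (h3 : ∀ i j, Complex.im (star (γ i) ⬝ᵥ M.mulVec (δ j)) = if i = j then 1 else 0) :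
    (∃ b : Module.Basis (Fin g) ℂ (Fin g → ℂ), ∀ i, b i = γ i) ∧
    (∃! τ : Matrix (Fin g) (Fin g) ℂ, ∀ j, δ j = ∑ i, τ i j • γ i) ∧
    ∀ τ : Matrix (Fin g) (Fin g) ℂ, (∀ j, δ j = ∑ i, τ i j • γ i) →
      τᵀ = τ ∧ (τ.map Complex.im).PosDef := by
  have : Nonempty (Fin g) := Fin.pos_iff_nonempty.mp hg
  have hli := gamma_indep M hM γ δ h1 h3
  have hcard : Fintype.card (Fin g) = Module.finrank ℂ (Fin g → ℂ) := by simp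
  let b : Module.Basis (Fin g) ℂ (Fin g → ℂ) := basisOfLinearIndependentOfCardEqFinrank hli hcard
  have hb : ∀ i, b i = γ i := fun i => by
    simp [b, coe_basisOfLinearIndependentOfCardEqFinrank]
  refine ⟨⟨b, hb⟩, ?_, ?_⟩
  · refine ⟨Matrix.of fun i j => b.repr (δ j) i, fun j => ?_, fun τ' hτ' => ?_⟩
    · conv_lhs => rw [← b.sum_repr (δ j)]
      exact Finset.sum_congr rfl fun i _ => by rw [hb, Matrix.of_apply]
    · ext i j
      have hδ : δ j = ∑ i, τ' i j • b i := by
        rw [hτ' j]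
        exact Finset.sum_congr rfl fun i _ => by rw [hb]
      simp only [Matrix.of_apply, hδ, Module.Basis.repr_sum_self]
  · intro τ hτ
    -- notation
    set P : Fin g → Fin g → ℂ := fun k i => star (γ k) ⬝ᵥ M.mulVec (γ i) with hP
    set Q : Fin g → Fin g → ℂ := fun k j => star (γ k) ⬝ᵥ M.mulVec (δ j) with hQdef
    have hPsym : ∀ k i, (P k i).re = (P i k).re := fun k i => by
      rw [hP]
      simp only
      rw [herm_swap M hM.1 (γ i) (γ k)]
      exact Complex.conj_re _
    have hQ : ∀ k j, Q k j = ∑ i, τ i j * P k i := fun k j => by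
      rw [hQdef, hP]
      simp only
      rw [show δ j = _ from hτ j, hm_sum_right]
    -- S Y = 1 entrywise
    have hSYe : ∀ k j, ∑ i, (P k i).re * (τ i j).im = if k = j then 1 else 0 := by
      intro k j
      have h := congrArg Complex.im (hQ k j)
      rw [Complex.im_sum] at h
      have he : ∀ i, (τ i j * P k i).im = (P k i).re * (τ i j).im := fun i => by
        rw [Complex.mul_im, h1]; ring
      rw [Finset.sum_congr rfl (fun i _ => he i)] at h
      rw [← h]
      exact h3 k j
    -- Re Q = S X entrywise
    have hRe : ∀ k j, (Q k j).re = ∑ i, (τ i j).re * (P k i).re := by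
      intro k j
      have h := congrArg Complex.re (hQ k j)
      rw [Complex.re_sum] at h
      have he : ∀ i, (τ i j * P k i).re = (τ i j).re * (P k i).re := fun i => by
        rw [Complex.mul_re, h1]; ring
      rw [Finset.sum_congr rfl (fun i _ => he i)] at h
      exact h
    -- X = Yᵀ Re Q entrywise
    have hXe : ∀ j l, (τ l j).re = ∑ k, (τ k j).im * (Q k l).re := by
      intro j l
      have hD : star (δ j) ⬝ᵥ M.mulVec (δ l)
          = ∑ k, (starRingEnd ℂ) (τ k j) * Q k l := by
        rw [hQdef]
        simp only
        rw [show δ j = _ from hτ j, hm_sum_left]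
      have h := congrArg Complex.im hD
      rw [h2, Complex.im_sum] at h
      have he : ∀ k, ((starRingEnd ℂ) (τ k j) * Q k l).im
          = (τ k j).re * (if k = l then 1 else 0) - (τ k j).im * (Q k l).re := fun k => by
        rw [Complex.mul_im, Complex.conj_re, Complex.conj_im,
          show (Q k l).im = (if k = l then 1 else 0) from h3 k l]
        ring
      rw [Finset.sum_congr rfl (fun k _ => he k)] at h
      rw [Finset.sum_sub_distrib] at h
      simp only [mul_ite, mul_one, mul_zero, Finset.sum_ite_eq', Finset.mem_univ, if_true] at h
      linarith [h]
    -- symmetry of real part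
    have hXsym : ∀ l j, (τ l j).re = (τ j l).re := by
      intro l j
      calc (τ l j).re = ∑ k, (τ k j).im * (Q k l).re := hXe j l
        _ = ∑ k, (τ k j).im * ∑ i, (τ i l).re * (P k i).re := by
            exact Finset.sum_congr rfl fun k _ => by rw [hRe]
        _ = ∑ i, (τ i l).re * ∑ k, (P i k).re * (τ k j).im := by
            simp_rw [Finset.mul_sum]
            rw [Finset.sum_comm]
            refine Finset.sum_congr rfl fun i _ => Finset.sum_congr rfl fun k _ => ?_
            rw [hPsym i k]
            ring
        _ = ∑ i, (τ i l).re * (if i = j then 1 else 0) := by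
            exact Finset.sum_congr rfl fun i _ => by rw [hSYe]
        _ = (τ j l).re := by simp
    -- matrices
    set Sm : Matrix (Fin g) (Fin g) ℝ := Matrix.of fun k i => (P k i).re with hSm
    have hSY : Sm * τ.map Complex.im = 1 := by
      ext k j
      rw [Matrix.mul_apply, Matrix.one_apply]
      simpa [hSm] using hSYe k j
    have hYS : τ.map Complex.im * Sm = 1 := mul_eq_one_comm.mp hSY
    have hSsym : Smᵀ = Sm := by
      ext k i
      exact hPsym i k
    have hYsym : (τ.map Complex.im)ᵀ = τ.map Complex.im := by
      calc (τ.map Complex.im)ᵀ = (τ.map Complex.im)ᵀ * (Sm * τ.map Complex.im) := by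
            rw [hSY, Matrix.mul_one]
        _ = ((τ.map Complex.im)ᵀ * Smᵀ) * τ.map Complex.im := by
            rw [hSsym, Matrix.mul_assoc]
        _ = (Sm * τ.map Complex.im)ᵀ * τ.map Complex.im := by
            rw [Matrix.transpose_mul]
        _ = τ.map Complex.im := by rw [hSY, Matrix.transpose_one, Matrix.one_mul]
    constructor
    · ext i j
      refine Complex.ext (hXsym j i) ?_
      have := congrFun (congrFun hYsym i) j
      simpa [Matrix.transpose_apply, Matrix.map_apply] using this
    · -- Sm is pos def
      have hSpd : Sm.PosDef := by
        refine Matrix.PosDef.of_dotProduct_mulVec_pos ?_ ?_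
        · ext k i
          simp only [Matrix.conjTranspose_apply, star_trivial]
          exact hPsym i k
        · intro x hx
          have hv : (∑ i, (x i : ℂ) • γ i) ≠ 0 := by
            intro h
            exact hx (real_indep M γ δ h3 x h)
          have hpos := hM.dotProduct_mulVec_pos hv
          rw [Complex.lt_def] at hpos
          have hre : (star (∑ i, (x i : ℂ) • γ i) ⬝ᵥ
              M.mulVec (∑ i, (x i : ℂ) • γ i)).re
              = ∑ k, x k * ∑ i, x i * (P k i).re := by
            rw [hm_sum_left, Complex.re_sum]
            refine Finset.sum_congr rfl fun k _ => ?_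
            rw [hm_sum_right, Complex.conj_ofReal]
            rw [show ((x k : ℂ) * ∑ i, (x i : ℂ) * P k i).re
                = x k * (∑ i, (x i : ℂ) * P k i).re from by
              rw [Complex.mul_re, Complex.ofReal_re, Complex.ofReal_im]; ring]
            congr 1
            rw [Complex.re_sum]
            refine Finset.sum_congr rfl fun i _ => ?_
            rw [Complex.mul_re, Complex.ofReal_re, Complex.ofReal_im]
            ring
          have : (0:ℝ) < ∑ k, x k * ∑ i, x i * (P k i).re := by
            rw [← hre]
            simpa using hpos.1
          refine this.trans_eq (Eq.symm ?_)
          simp only [dotProduct, Matrix.mulVec, star_trivial, hSm, Matrix.of_apply]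
          refine Finset.sum_congr rfl fun k _ => ?_
          congr 1
          exact Finset.sum_congr rfl fun i _ => mul_comm _ _
      have hinv : Sm⁻¹ = τ.map Complex.im := Matrix.inv_eq_right_inv hSY
      rw [← hinv]
      exact hSpd.inv
end

section
/- Let g ≥ 1. For every δ = (A B; C D) ∈ Sp_{2g}(ℂ), the set U_δ := {τ ∈ H_g : Cτ + D is invertible} is an open, dense, and connected subset of H_g (with the topology induced from the space of complex g×g matrices). -/
open Matrix

noncomputable section

/-- The standard symplectic matrix `J = (0 1; −1 0)` in `g × g` block form. -/
def Jm (R : Type*) [CommRing R] (g : ℕ) :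
    Matrix (Fin g ⊕ Fin g) (Fin g ⊕ Fin g) R :=
  fromBlocks 0 1 (-1) 0

/-- The complex symplectic group `Sp_{2g}(ℂ)` as a set of matrices. -/
def SpSet (g : ℕ) : Set (Matrix (Fin g ⊕ Fin g) (Fin g ⊕ Fin g) ℂ) :=
  {M | M * Jm ℂ g * Mᵀ = Jm ℂ g}

/-- The Siegel upper half-space `H_g`: symmetric complex matrices with positive
definite imaginary part. -/
def SiegelUpperHalf (g : ℕ) : Set (Matrix (Fin g) (Fin g) ℂ) :=
  {τ | τᵀ = τ ∧ (τ.map Complex.im).PosDef}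

/-- The automorphy factor `j(σ, τ) = Cτ + D` for `σ = (A B; C D)`. -/
def jmat {g : ℕ} (σ : Matrix (Fin g ⊕ Fin g) (Fin g ⊕ Fin g) ℂ)
    (τ : Matrix (Fin g) (Fin g) ℂ) : Matrix (Fin g) (Fin g) ℂ :=
  σ.toBlocks₂₁ * τ + σ.toBlocks₂₂

namespace Statement9Aux

open Complex Set Filter Topology Metric Finset

variable {g : ℕ}

/-- entrywise bound on a quadratic form -/
lemma abs_dot_le (B : Matrix (Fin g) (Fin g) ℝ) (x : Fin g → ℝ) :
    |x ⬝ᵥ B *ᵥ x| ≤ (∑ i, ∑ j, |B i j|) * (∑ k, x k ^ 2) := by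
  have hxx : ∀ i j, |x i| * |x j| ≤ ∑ k, x k ^ 2 := by
    intro i j
    have h1 : x i ^ 2 ≤ ∑ k, x k ^ 2 :=
      Finset.single_le_sum (f := fun k => x k ^ 2) (fun k _ => sq_nonneg _) (Finset.mem_univ i)
    have h2 : x j ^ 2 ≤ ∑ k, x k ^ 2 :=
      Finset.single_le_sum (f := fun k => x k ^ 2) (fun k _ => sq_nonneg _) (Finset.mem_univ j)
    nlinarith [sq_nonneg (|x i| - |x j|), _root_.sq_abs (x i), _root_.sq_abs (x j)]
  have hterm : ∀ i, |x i * (B *ᵥ x) i| ≤ ∑ j, |B i j| * (∑ k, x k ^ 2) := by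
    intro i
    have : x i * (B *ᵥ x) i = ∑ j, x i * (B i j * x j) := by
      simp [Matrix.mulVec, dotProduct, Finset.mul_sum]
    rw [this]
    refine (Finset.abs_sum_le_sum_abs _ _).trans (Finset.sum_le_sum fun j _ => ?_)
    rw [abs_mul, abs_mul]
    calc |x i| * (|B i j| * |x j|) = |B i j| * (|x i| * |x j|) := by ring
    _ ≤ |B i j| * (∑ k, x k ^ 2) := by
        exact mul_le_mul_of_nonneg_left (hxx i j) (abs_nonneg _)
  calc |x ⬝ᵥ B *ᵥ x| = |∑ i, x i * (B *ᵥ x) i| := by simp [dotProduct]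
  _ ≤ ∑ i, |x i * (B *ᵥ x) i| := Finset.abs_sum_le_sum_abs _ _
  _ ≤ ∑ i, ∑ j, |B i j| * (∑ k, x k ^ 2) := Finset.sum_le_sum fun i _ => hterm i
  _ = (∑ i, ∑ j, |B i j|) * (∑ k, x k ^ 2) := by rw [Finset.sum_mul]; congr 1; ext i; rw [Finset.sum_mul]

lemma sum_sq_pos {x : Fin g → ℝ} (hx : x ≠ 0) : 0 < ∑ k, x k ^ 2 := by
  obtain ⟨k, hk⟩ := Function.ne_iff.mp hx
  exact Finset.sum_pos' (fun k _ => sq_nonneg _) ⟨k, Finset.mem_univ k, pow_two_pos_of_ne_zero hk⟩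

lemma isHermitian_of_symm {N : Matrix (Fin g) (Fin g) ℝ} (h : Nᵀ = N) : N.IsHermitian := by
  ext i j
  rw [Matrix.conjTranspose_apply, star_trivial]
  have := congrFun (congrFun h i) j
  rwa [Matrix.transpose_apply] at this

/-- a positive definite matrix has a uniform quadratic lower bound -/
lemma posdef_quant (hg : 1 ≤ g) {A : Matrix (Fin g) (Fin g) ℝ} (hA : A.PosDef) :
    ∃ c > 0, ∀ x : Fin g → ℝ, c * (∑ k, x k ^ 2) ≤ x ⬝ᵥ A *ᵥ x := by
  set Sph : Set (Fin g → ℝ) := {x | ∑ k, x k ^ 2 = 1} with hSph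
  have hf : Continuous fun x : Fin g → ℝ => x ⬝ᵥ A *ᵥ x := by
    simp only [dotProduct, Matrix.mulVec]
    exact continuous_finset_sum _ fun i _ => (continuous_apply i).mul
      (continuous_finset_sum _ fun j _ => (continuous_const.mul (continuous_apply j)))
  have hclosed : IsClosed Sph :=
    isClosed_eq (continuous_finset_sum _ fun k _ => (continuous_apply k).pow 2) continuous_const
  have hsub : Sph ⊆ Metric.closedBall 0 1 := by
    intro x hx
    rw [Metric.mem_closedBall, dist_zero_right]
    refine (pi_norm_le_iff_of_nonneg zero_le_one).mpr fun i => ?_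
    have h1 : x i ^ 2 ≤ 1 := by
      rw [← hx]
      exact Finset.single_le_sum (f := fun k => x k ^ 2) (fun k _ => sq_nonneg _) (Finset.mem_univ i)
    rw [Real.norm_eq_abs]
    nlinarith [abs_nonneg (x i), _root_.sq_abs (x i)]
  have hcomp : IsCompact Sph :=
    (isCompact_closedBall _ _).of_isClosed_subset hclosed hsub
  have hne : Sph.Nonempty := by
    have i0 : Fin g := ⟨0, hg⟩
    refine ⟨(Pi.single (⟨0, hg⟩ : Fin g) 1 : Fin g → ℝ), ?_⟩
    have : ∀ k, ((Pi.single (⟨0, hg⟩ : Fin g) 1 : Fin g → ℝ) k) ^ 2 = if k = (⟨0, hg⟩ : Fin g) then 1 else 0 := by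
      intro k
      rcases eq_or_ne k (⟨0, hg⟩ : Fin g) with rfl | hk
      · simp
      · simp [Pi.single_apply, hk]
    simp only [hSph, Set.mem_setOf_eq]
    rw [Finset.sum_congr rfl fun k _ => this k]
    simp
  obtain ⟨z, hzS, hz⟩ := hcomp.exists_isMinOn hne hf.continuousOn
  have hz0 : z ≠ 0 := by
    intro h
    rw [h] at hzS
    simp [hSph] at hzS
  have hc : 0 < z ⬝ᵥ A *ᵥ z := by
    have := hA.dotProduct_mulVec_pos hz0
    simpa using this
  refine ⟨z ⬝ᵥ A *ᵥ z, hc, fun x => ?_⟩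
  rcases eq_or_ne x 0 with rfl | hx
  · simp
  · have hSx : 0 < ∑ k, x k ^ 2 := sum_sq_pos hx
    set r : ℝ := Real.sqrt (∑ k, x k ^ 2) with hr
    have hrpos : 0 < r := Real.sqrt_pos.mpr hSx
    have hr2 : r * r = ∑ k, x k ^ 2 := Real.mul_self_sqrt hSx.le
    have hyS : r⁻¹ • x ∈ Sph := by
      simp only [hSph, Set.mem_setOf_eq, Pi.smul_apply, smul_eq_mul, mul_pow]
      rw [← Finset.mul_sum]
      have : r⁻¹ ^ 2 = (r * r)⁻¹ := by rw [sq, mul_inv]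
      rw [this, hr2]
      exact inv_mul_cancel₀ hSx.ne'
    have hmin : z ⬝ᵥ A *ᵥ z ≤ (r⁻¹ • x) ⬝ᵥ A *ᵥ (r⁻¹ • x) := hz hyS
    have hval : (r⁻¹ • x) ⬝ᵥ A *ᵥ (r⁻¹ • x) = r⁻¹ * (r⁻¹ * (x ⬝ᵥ A *ᵥ x)) := by
      rw [Matrix.mulVec_smul, dotProduct_smul, smul_dotProduct]
      simp [smul_eq_mul, mul_assoc]
    rw [hval] at hmin
    calc (z ⬝ᵥ A *ᵥ z) * (∑ k, x k ^ 2) = (z ⬝ᵥ A *ᵥ z) * (r * r) := by rw [hr2]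
    _ ≤ (r⁻¹ * (r⁻¹ * (x ⬝ᵥ A *ᵥ x))) * (r * r) :=
        mul_le_mul_of_nonneg_right hmin (by positivity)
    _ = x ⬝ᵥ A *ᵥ x := by field_simp

lemma posDef_of_close {A N : Matrix (Fin g) (Fin g) ℝ} (hA : A.PosDef) {c : ℝ} (hc : 0 < c)
    (hq : ∀ x, c * (∑ k, x k ^ 2) ≤ x ⬝ᵥ A *ᵥ x) (hsym : Nᵀ = N)
    (hsmall : (∑ i, ∑ j, |N i j - A i j|) < c) : N.PosDef := by
  refine Matrix.PosDef.of_dotProduct_mulVec_pos (isHermitian_of_symm hsym) fun x hx => ?_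
  have hSx : 0 < ∑ k, x k ^ 2 := sum_sq_pos hx
  have hsplit : x ⬝ᵥ N *ᵥ x = x ⬝ᵥ A *ᵥ x + x ⬝ᵥ ((N - A) *ᵥ x) := by
    rw [Matrix.sub_mulVec, dotProduct_sub]; ring
  have habs := abs_dot_le (N - A) x
  have hEentry : ∀ i j, (N - A) i j = N i j - A i j := fun i j => rfl
  simp only [Matrix.sub_apply] at habs
  have h1 : -((∑ i, ∑ j, |N i j - A i j|) * (∑ k, x k ^ 2)) ≤ x ⬝ᵥ (N - A) *ᵥ x :=
    neg_le_of_abs_le habs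
  have h2 : (∑ i, ∑ j, |N i j - A i j|) * (∑ k, x k ^ 2) < c * (∑ k, x k ^ 2) :=
    mul_lt_mul_of_pos_right hsmall hSx
  have hpos : 0 < x ⬝ᵥ N *ᵥ x := by
    rw [hsplit]
    have := hq x
    linarith
  simpa using hpos

lemma posDef_add_smul_one (hg : 1 ≤ g) {M : Matrix (Fin g) (Fin g) ℝ} (hsym : Mᵀ = M) {t : ℝ}
    (ht : (∑ i, ∑ j, |M i j|) < t) : (M + t • 1).PosDef := by
  have hsym' : (M + t • (1 : Matrix (Fin g) (Fin g) ℝ))ᵀ = M + t • 1 := by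
    rw [Matrix.transpose_add, Matrix.transpose_smul, Matrix.transpose_one, hsym]
  refine Matrix.PosDef.of_dotProduct_mulVec_pos (isHermitian_of_symm hsym') fun x hx => ?_
  have hSx : 0 < ∑ k, x k ^ 2 := sum_sq_pos hx
  have hval : x ⬝ᵥ (M + t • (1:Matrix (Fin g) (Fin g) ℝ)) *ᵥ x
      = x ⬝ᵥ M *ᵥ x + t * (∑ k, x k ^ 2) := by
    rw [Matrix.add_mulVec, dotProduct_add, Matrix.smul_mulVec, Matrix.one_mulVec,
      dotProduct_smul]
    congr 1
    simp [dotProduct, smul_eq_mul, sq]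
  have habs := abs_dot_le M x
  have h1 : -((∑ i, ∑ j, |M i j|) * (∑ k, x k ^ 2)) ≤ x ⬝ᵥ M *ᵥ x := neg_le_of_abs_le habs
  have h2 : (∑ i, ∑ j, |M i j|) * (∑ k, x k ^ 2) < t * (∑ k, x k ^ 2) :=
    mul_lt_mul_of_pos_right ht hSx
  have hpos : 0 < x ⬝ᵥ (M + t • (1:Matrix (Fin g) (Fin g) ℝ)) *ᵥ x := by rw [hval]; linarith
  simpa using hpos

/-- positive-definiteness is an open condition along a continuous family of symmetric matrices -/
lemma isOpen_posDef_family {X : Type*} [TopologicalSpace X] (hg : 1 ≤ g)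
    {ψ : X → Matrix (Fin g) (Fin g) ℝ} (hψ : Continuous ψ) (hsym : ∀ x, (ψ x)ᵀ = ψ x) :
    IsOpen {x | (ψ x).PosDef} := by
  rw [isOpen_iff_mem_nhds]
  intro x₀ hx₀
  obtain ⟨c, hc, hq⟩ := posdef_quant hg hx₀
  have hcont : Continuous fun x => ∑ i, ∑ j, |ψ x i j - ψ x₀ i j| :=
    continuous_finset_sum _ fun i _ => continuous_finset_sum _ fun j _ =>
      ((hψ.matrix_elem i j).sub continuous_const).abs
  have hmem : {x | (∑ i, ∑ j, |ψ x i j - ψ x₀ i j|) < c} ∈ 𝓝 x₀ :=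
    (isOpen_lt hcont continuous_const).mem_nhds (by simp [hc])
  filter_upwards [hmem] with x hxlt
  exact posDef_of_close hx₀ hc hq (hsym x) hxlt



/-- determinant of an affine family of matrices is an entire function -/
lemma analytic_det_affine (N₀ N₁ : Matrix (Fin g) (Fin g) ℂ) :
    AnalyticOnNhd ℂ (fun z => (N₀ + z • N₁).det) (Set.univ : Set ℂ) := by
  have hfun : (fun z : ℂ => (N₀ + z • N₁).det)
      = fun z => ∑ σ : Equiv.Perm (Fin g), ((Equiv.Perm.sign σ : ℤ) : ℂ) *
          ∏ i, (N₀ (σ i) i + z * N₁ (σ i) i) := by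
    funext z
    rw [Matrix.det_apply]
    refine Finset.sum_congr rfl fun σ _ => ?_
    rw [Units.smul_def, zsmul_eq_mul]
    simp [Matrix.add_apply, Matrix.smul_apply, smul_eq_mul]
  rw [hfun]
  rw [← Finset.sum_fn]
  refine Finset.analyticOnNhd_sum _ fun σ _ => analyticOnNhd_const.mul ?_
  exact Finset.analyticOnNhd_fun_prod _ fun i _ =>
    analyticOnNhd_const.add (analyticOnNhd_id.mul analyticOnNhd_const)

/-- the zero set of a not-identically-zero entire function is countable -/
lemma countable_zeros {q : ℂ → ℂ} (hq : AnalyticOnNhd ℂ q Set.univ) {z₀ : ℂ} (h0 : q z₀ ≠ 0) :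
    {z : ℂ | q z = 0}.Countable := by
  rcases hq.eqOn_zero_or_eventually_ne_zero_of_preconnected isPreconnected_univ with h | h
  · exact absurd (h (Set.mem_univ z₀)) h0
  · have hmem : {x : ℂ | q x ≠ 0} ∈ Filter.codiscreteWithin (Set.univ : Set ℂ) := h
    rw [mem_codiscreteWithin] at hmem
    have hdiff : Set.univ \ {x : ℂ | q x ≠ 0} = {z : ℂ | q z = 0} := by
      ext z; simp
    have hdisc : ∀ x : ℂ, Disjoint (𝓝[≠] x) (𝓟 {z : ℂ | q z = 0}) := by
      intro x
      have := hmem x (Set.mem_univ x)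
      rwa [hdiff] at this
    have h2 := (isClosed_and_discrete_iff.mpr hdisc).2
    have : Countable {z : ℂ | q z = 0} := by
      haveI := isDiscrete_iff_discreteTopology.mp h2
      exact (TopologicalSpace.separableSpace_iff_countable).mp inferInstance
    exact Set.countable_coe_iff.mp this

/-- in a convex open subset of `ℂ`, removing a countable set keeps points joined -/
lemma joinedIn_convex_compl_countable {V Z : Set ℂ} (hV : Convex ℝ V) (hVo : IsOpen V)
    (hZ : Z.Countable) {a b : ℂ} (haV : a ∈ V) (haZ : a ∉ Z) (hbV : b ∈ V) (hbZ : b ∉ Z) :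
    JoinedIn (V \ Z) a b := by
  rcases eq_or_ne a b with rfl | hab
  · exact JoinedIn.refl ⟨haV, haZ⟩
  set c : ℂ := (2 : ℝ)⁻¹ • (a + b) with hc
  set x : ℂ := (2 : ℝ)⁻¹ • (b - a) with hx
  have Ia : c - x = a := by simp only [hc, hx]; module
  have Ib : c + x = b := by simp only [hc, hx]; module
  have x_ne_zero : x ≠ 0 := by
    simp only [hx]
    simpa using sub_ne_zero.2 hab.symm
  obtain ⟨y, hy⟩ : ∃ y, LinearIndependent ℝ ![x, y] :=
    exists_linearIndependent_pair_of_one_lt_rank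
      (by rw [Complex.rank_real_complex]; norm_num) x_ne_zero
  have hy0 : y ≠ 0 := by
    have := hy.ne_zero 1
    simpa using this
  have hcV : c ∈ V := by
    have : c ∈ segment ℝ a b := by
      refine ⟨2⁻¹, 2⁻¹, by norm_num, by norm_num, by norm_num, ?_⟩
      rw [hc]; module
    exact hV.segment_subset haV hbV this
  obtain ⟨ε, hε, hball⟩ := Metric.isOpen_iff.mp hVo c hcV
  have hA : Set.Countable {t : ℝ | (segment ℝ (c + x) (c + t • y) ∩ Z).Nonempty} := by
    apply Set.countable_setOf_nonempty_of_disjoint _ (fun t => Set.inter_subset_right) hZ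
    intro t t' htt'
    apply Set.disjoint_iff_inter_eq_empty.2
    have N : {c + x} ∩ Z = ∅ := by
      rw [Set.singleton_inter_eq_empty, Ib]; exact hbZ
    rw [Set.inter_assoc, Set.inter_comm Z, Set.inter_assoc, Set.inter_self, ← Set.inter_assoc,
      ← Set.subset_empty_iff, ← N]
    apply Set.inter_subset_inter_left
    exact (segment_inter_eq_endpoint_of_linearIndependent_of_ne hy htt'.symm c).subset
  have hB : Set.Countable {t : ℝ | (segment ℝ (c - x) (c + t • y) ∩ Z).Nonempty} := by
    apply Set.countable_setOf_nonempty_of_disjoint _ (fun t => Set.inter_subset_right) hZ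
    intro t t' htt'
    apply Set.disjoint_iff_inter_eq_empty.2
    have N : {c - x} ∩ Z = ∅ := by
      rw [Set.singleton_inter_eq_empty, Ia]; exact haZ
    rw [Set.inter_assoc, Set.inter_comm Z, Set.inter_assoc, Set.inter_self, ← Set.inter_assoc,
      ← Set.subset_empty_iff, ← N]
    apply Set.inter_subset_inter_left
    rw [sub_eq_add_neg _ x]
    refine (segment_inter_eq_endpoint_of_linearIndependent_of_ne ?_ htt'.symm c).subset
    convert hy.units_smul ![-1, 1]
    simp [← List.ofFn_inj]
    all_goals rfl
  have hIoo : Set.Nonempty ((Set.Ioo (0:ℝ) (ε / ‖y‖)) \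
      ({t : ℝ | (segment ℝ (c + x) (c + t • y) ∩ Z).Nonempty}
        ∪ {t : ℝ | (segment ℝ (c - x) (c + t • y) ∩ Z).Nonempty})) := by
    have hd : Dense (({t : ℝ | (segment ℝ (c + x) (c + t • y) ∩ Z).Nonempty}
        ∪ {t : ℝ | (segment ℝ (c - x) (c + t • y) ∩ Z).Nonempty}) : Set ℝ)ᶜ :=
      (hA.union hB).dense_compl ℝ
    have hIopen : IsOpen (Set.Ioo (0:ℝ) (ε / ‖y‖)) := isOpen_Ioo
    have hIne : (Set.Ioo (0:ℝ) (ε / ‖y‖)).Nonempty := by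
      exact Set.nonempty_Ioo.mpr (div_pos hε (norm_pos_iff.mpr hy0))
    obtain ⟨t, ht1, ht2⟩ := hd.inter_open_nonempty _ hIopen hIne
    exact ⟨t, ht1, ht2⟩
  obtain ⟨t, htI, htAB⟩ := hIoo
  rw [Set.mem_union] at htAB
  push_neg at htAB
  obtain ⟨htA, htB⟩ := htAB
  simp only [Set.mem_setOf_eq, Set.not_nonempty_iff_eq_empty] at htA htB
  set z : ℂ := c + t • y with hz
  have hzV : z ∈ V := by
    apply hball
    rw [Metric.mem_ball, hz, dist_eq_norm]
    have he : c + t • y - c = t • y := by ring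
    rw [he, norm_smul, Real.norm_eq_abs, abs_of_pos htI.1]
    exact (lt_div_iff₀ (norm_pos_iff.mpr hy0)).mp htI.2
  have JA : JoinedIn (V \ Z) a z := by
    apply JoinedIn.of_segment_subset
    rw [Set.subset_diff]
    constructor
    · exact hV.segment_subset haV hzV
    · rw [Set.disjoint_iff_inter_eq_empty, ← Ia]
      exact htB
  have JB : JoinedIn (V \ Z) b z := by
    apply JoinedIn.of_segment_subset
    rw [Set.subset_diff]
    constructor
    · exact hV.segment_subset hbV hzV
    · rw [Set.disjoint_iff_inter_eq_empty, ← Ib]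
      exact htA
  exact JA.trans JB.symm



/-- Existence of a symmetric `τ` with `C τ + D` invertible, for a coprime symmetric pair. -/
lemma exists_symm_isUnit (C D : Matrix (Fin g) (Fin g) ℂ) (h1 : C * Dᵀ = D * Cᵀ)
    (h2 : ∃ X Y : Matrix (Fin g) (Fin g) ℂ, IsUnit (C * X + D * Y)) :
    ∃ τ : Matrix (Fin g) (Fin g) ℂ, τᵀ = τ ∧ IsUnit (C * τ + D) := by
  classical
  obtain ⟨L, L', d, hdiag⟩ := Matrix.Pivot.exists_list_transvec_mul_mul_list_transvec_eq_diagonal C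
  set P : Matrix (Fin g) (Fin g) ℂ := (L.map Matrix.TransvectionStruct.toMatrix).prod with hP
  set Q : Matrix (Fin g) (Fin g) ℂ := (L'.map Matrix.TransvectionStruct.toMatrix).prod with hQ
  have hPdet : IsUnit P.det := by
    rw [hP, Matrix.TransvectionStruct.det_toMatrix_prod]; exact isUnit_one
  have hQdet : IsUnit Q.det := by
    rw [hQ, Matrix.TransvectionStruct.det_toMatrix_prod]; exact isUnit_one
  have hQtdet : IsUnit Qᵀ.det := by rwa [Matrix.det_transpose]
  have hP1 : P⁻¹ * P = 1 := Matrix.nonsing_inv_mul P hPdet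
  have hP2 : P * P⁻¹ = 1 := Matrix.mul_nonsing_inv P hPdet
  have hQ1 : Q⁻¹ * Q = 1 := Matrix.nonsing_inv_mul Q hQdet
  have hQ2 : Q * Q⁻¹ = 1 := Matrix.mul_nonsing_inv Q hQdet
  have hQt1 : (Qᵀ)⁻¹ * Qᵀ = 1 := Matrix.nonsing_inv_mul _ hQtdet
  have hQt2 : Qᵀ * (Qᵀ)⁻¹ = 1 := Matrix.mul_nonsing_inv _ hQtdet
  set D' : Matrix (Fin g) (Fin g) ℂ := P * D * (Qᵀ)⁻¹ with hD'
  -- C = P⁻¹ * diagonal d * Q⁻¹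
  have hC : C = P⁻¹ * diagonal d * Q⁻¹ := by
    rw [← hdiag]
    have : P⁻¹ * (P * C * Q) * Q⁻¹ = (P⁻¹ * P) * C * (Q * Q⁻¹) := by
      simp only [Matrix.mul_assoc]
    rw [this, hP1, hQ2, Matrix.one_mul, Matrix.mul_one]
  -- symmetry relation for the transformed pair
  have hsymrel : diagonal d * D'ᵀ = D' * diagonal d := by
    have hdt : D'ᵀ = Q⁻¹ * Dᵀ * Pᵀ := by
      rw [hD', Matrix.transpose_mul, Matrix.transpose_mul, Matrix.transpose_nonsing_inv,
        Matrix.transpose_transpose, Matrix.mul_assoc]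
    have lhs : diagonal d * D'ᵀ = P * (C * Dᵀ) * Pᵀ := by
      rw [hdt, ← hdiag]
      calc P * C * Q * (Q⁻¹ * Dᵀ * Pᵀ) = P * (C * ((Q * Q⁻¹) * (Dᵀ * Pᵀ))) := by
            simp only [Matrix.mul_assoc]
      _ = P * (C * Dᵀ) * Pᵀ := by rw [hQ2, Matrix.one_mul]; simp only [Matrix.mul_assoc]
    have hdiagt : (diagonal d : Matrix (Fin g) (Fin g) ℂ) = Qᵀ * Cᵀ * Pᵀ := by
      rw [← Matrix.diagonal_transpose, ← hdiag, Matrix.transpose_mul, Matrix.transpose_mul]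
      simp only [Matrix.mul_assoc]
    have rhs : D' * diagonal d = P * (D * Cᵀ) * Pᵀ := by
      rw [hD', hdiagt]
      calc P * D * Qᵀ⁻¹ * (Qᵀ * Cᵀ * Pᵀ) = P * (D * ((Qᵀ⁻¹ * Qᵀ) * (Cᵀ * Pᵀ))) := by
            simp only [Matrix.mul_assoc]
      _ = P * (D * Cᵀ) * Pᵀ := by rw [hQt1, Matrix.one_mul]; simp only [Matrix.mul_assoc]
    rw [lhs, rhs, h1]
  have hrel : ∀ i j, d i * D' j i = D' i j * d j := by
    intro i j
    have := congrFun (congrFun hsymrel i) j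
    rwa [Matrix.diagonal_mul, Matrix.mul_diagonal, Matrix.transpose_apply] at this
  have hvanish : ∀ i j, d i = 0 → d j ≠ 0 → D' i j = 0 := by
    intro i j hi hj
    have := hrel i j
    rw [hi, zero_mul] at this
    exact (mul_eq_zero.mp this.symm).resolve_right hj
  -- the symmetric matrix in the new coordinates
  set τ' : Matrix (Fin g) (Fin g) ℂ :=
    Matrix.of (fun i j => if d i ≠ 0 ∧ d j ≠ 0
      then ((if i = j then 1 else 0) - D' i j) / d i else 0) with hτ'
  have hτ'symm : τ'ᵀ = τ' := by
    ext i j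
    rw [Matrix.transpose_apply]
    show (if d j ≠ 0 ∧ d i ≠ 0 then ((if j = i then 1 else 0) - D' j i) / d j else 0)
      = (if d i ≠ 0 ∧ d j ≠ 0 then ((if i = j then 1 else 0) - D' i j) / d i else 0)
    by_cases hi : d i ≠ 0 <;> by_cases hj : d j ≠ 0
    · rw [if_pos (show d j ≠ 0 ∧ d i ≠ 0 from ⟨hj, hi⟩),
        if_pos (show d i ≠ 0 ∧ d j ≠ 0 from ⟨hi, hj⟩)]
      rcases eq_or_ne i j with heq | hne
      · subst heq; rfl
      · rw [if_neg (Ne.symm hne), if_neg hne, div_eq_div_iff hj hi]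
        linear_combination - hrel i j
    · rw [if_neg (fun h => hj h.1), if_neg (fun h => hj h.2)]
    · rw [if_neg (fun h => hi h.2), if_neg (fun h => hi h.1)]
    · rw [if_neg (fun h => hi h.2), if_neg (fun h => hi h.1)]
  set M : Matrix (Fin g) (Fin g) ℂ := diagonal d * τ' + D' with hM
  have hMentry : ∀ i j, M i j = if d i ≠ 0 ∧ d j ≠ 0
      then (if i = j then (1:ℂ) else 0) else D' i j := by
    intro i j
    rw [hM, Matrix.add_apply, Matrix.diagonal_mul]
    by_cases hij : d i ≠ 0 ∧ d j ≠ 0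
    · rw [if_pos hij]
      show d i * (if d i ≠ 0 ∧ d j ≠ 0 then ((if i = j then 1 else 0) - D' i j) / d i else 0)
          + D' i j = _
      rw [if_pos hij, mul_div_cancel₀ _ hij.1]
      ring
    · rw [if_neg hij]
      show d i * (if d i ≠ 0 ∧ d j ≠ 0 then ((if i = j then 1 else 0) - D' i j) / d i else 0)
          + D' i j = _
      rw [if_neg hij, mul_zero, zero_add]
  -- M is invertible via injectivity of vecMul
  have hMunit : IsUnit M := by
    rw [← Matrix.vecMul_injective_iff_isUnit]
    have hker : ∀ v : Fin g → ℂ, v ᵥ* M = 0 → v = 0 := by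
      intro v hv
      have hstep1 : ∀ j, d j ≠ 0 → v j = 0 := by
        intro j hj
        have hvj := congrFun hv j
        rw [Matrix.vecMul, Pi.zero_apply] at hvj
        have : ∀ i, v i * M i j = v i * (if i = j then 1 else 0) := by
          intro i
          rw [hMentry i j]
          by_cases hi : d i ≠ 0
          · rw [if_pos ⟨hi, hj⟩]
          · push_neg at hi
            rw [if_neg (by tauto), hvanish i j hi hj]
            have hij : i ≠ j := fun h => hj (h ▸ hi)
            rw [if_neg hij, mul_zero]
        rw [dotProduct] at hvj
        rw [Finset.sum_congr rfl (fun i _ => this i)] at hvj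
        simpa [Finset.sum_ite_eq' Finset.univ j] using hvj
      have hCker : v ᵥ* diagonal d = 0 := by
        funext j
        rw [Matrix.vecMul_diagonal, Pi.zero_apply]
        by_cases hj : d j ≠ 0
        · rw [hstep1 j hj, zero_mul]
        · push_neg at hj; rw [hj, mul_zero]
      have hDker : v ᵥ* D' = 0 := by
        funext j
        have hvj := congrFun hv j
        rw [Matrix.vecMul, Pi.zero_apply, dotProduct] at hvj
        rw [Matrix.vecMul, Pi.zero_apply, dotProduct]
        rw [← hvj]
        refine Finset.sum_congr rfl fun i _ => ?_
        by_cases hi : d i ≠ 0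
        · rw [hstep1 i hi, zero_mul, zero_mul]
        · rw [hMentry i j, if_neg (by tauto)]
      obtain ⟨X, Y, hXY⟩ := h2
      set U : Matrix (Fin g) (Fin g) ℂ := diagonal d * (Q⁻¹ * X) + D' * (Qᵀ * Y) with hU
      have hUeq : U = P * (C * X + D * Y) := by
        rw [hU, hD']
        have e1 : diagonal d * (Q⁻¹ * X) = P * (C * X) := by
          rw [← hdiag]
          calc P * C * Q * (Q⁻¹ * X) = P * (C * ((Q * Q⁻¹) * X)) := by
                simp only [Matrix.mul_assoc]
          _ = P * (C * X) := by rw [hQ2, Matrix.one_mul]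
        have e2 : P * D * (Qᵀ)⁻¹ * (Qᵀ * Y) = P * (D * Y) := by
          calc P * D * (Qᵀ)⁻¹ * (Qᵀ * Y) = P * (D * (((Qᵀ)⁻¹ * Qᵀ) * Y)) := by
                simp only [Matrix.mul_assoc]
          _ = P * (D * Y) := by rw [hQt1, Matrix.one_mul]
        rw [e1, e2, Matrix.mul_add]
      have hUunit : IsUnit U := by
        rw [hUeq]
        have := ((Matrix.isUnit_iff_isUnit_det _).mp hXY)
        rw [Matrix.isUnit_iff_isUnit_det, Matrix.det_mul]
        exact hPdet.mul this
      have hvU : v ᵥ* U = 0 := by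
        have t1 : v ᵥ* (diagonal d * (Q⁻¹ * X)) = 0 := by
          rw [← Matrix.vecMul_vecMul, hCker, Matrix.zero_vecMul]
        have t2 : v ᵥ* (D' * (Qᵀ * Y)) = 0 := by
          rw [← Matrix.vecMul_vecMul, hDker, Matrix.zero_vecMul]
        rw [hU, Matrix.vecMul_add, t1, t2, add_zero]
      have hUdet : IsUnit U.det := (Matrix.isUnit_iff_isUnit_det _).mp hUunit
      have : v ᵥ* (U * U⁻¹) = 0 ᵥ* U⁻¹ := by
        rw [← Matrix.vecMul_vecMul, hvU, Matrix.zero_vecMul]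
      rwa [Matrix.mul_nonsing_inv _ hUdet, Matrix.vecMul_one, Matrix.zero_vecMul] at this
    intro u w huw
    have huw' : u ᵥ* M = w ᵥ* M := huw
    have : (u - w) ᵥ* M = 0 := by
      rw [Matrix.sub_vecMul, huw', sub_self]
    exact sub_eq_zero.mp (hker _ this)
  -- assemble
  refine ⟨Q * τ' * Qᵀ, ?_, ?_⟩
  · rw [Matrix.transpose_mul, Matrix.transpose_mul, Matrix.transpose_transpose, hτ'symm,
      Matrix.mul_assoc]
  · have e1 : C * (Q * τ' * Qᵀ) = P⁻¹ * (diagonal d * τ') * Qᵀ := by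
      rw [hC]
      calc P⁻¹ * diagonal d * Q⁻¹ * (Q * τ' * Qᵀ)
          = P⁻¹ * (diagonal d * ((Q⁻¹ * Q) * (τ' * Qᵀ))) := by simp only [Matrix.mul_assoc]
      _ = _ := by rw [hQ1, Matrix.one_mul]; simp only [Matrix.mul_assoc]
    have e2 : D = P⁻¹ * D' * Qᵀ := by
      rw [hD']
      calc D = (P⁻¹ * P) * D * (Qᵀ⁻¹ * Qᵀ) := by
            rw [hP1, hQt1, Matrix.one_mul, Matrix.mul_one]
      _ = P⁻¹ * (P * D * Qᵀ⁻¹) * Qᵀ := by simp only [Matrix.mul_assoc]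
    have hfinal : C * (Q * τ' * Qᵀ) + D = P⁻¹ * M * Qᵀ := by
      have hdistr : P⁻¹ * (diagonal d * τ' + D') * Qᵀ
          = P⁻¹ * (diagonal d * τ') * Qᵀ + P⁻¹ * D' * Qᵀ := by
        rw [Matrix.mul_add, Matrix.add_mul]
      rw [hM, hdistr, ← e1, ← e2]
    rw [hfinal, Matrix.isUnit_iff_isUnit_det, Matrix.det_mul, Matrix.det_mul]
    have hPinvdet : IsUnit (P⁻¹).det := by
      rw [Matrix.det_nonsing_inv, isUnit_ringInverse]
      exact hPdet
    exact (hPinvdet.mul ((Matrix.isUnit_iff_isUnit_det _).mp hMunit)).mul hQtdet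

lemma posDef_smul {A : Matrix (Fin g) (Fin g) ℝ} (hA : A.PosDef) {a : ℝ} (ha : 0 < a) :
    (a • A).PosDef := by
  refine Matrix.PosDef.of_dotProduct_mulVec_pos ?_ ?_
  · have h1 := hA.1
    ext i j
    rw [Matrix.conjTranspose_apply, Matrix.smul_apply, Matrix.smul_apply, star_trivial]
    have h2 := congrFun (congrFun h1 i) j
    rw [Matrix.conjTranspose_apply, star_trivial] at h2
    rw [h2]
  · intro x hx
    have h := hA.dotProduct_mulVec_pos hx
    rw [Matrix.smul_mulVec, dotProduct_smul, smul_eq_mul]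
    exact mul_pos ha h

lemma mem_H_segment {τ₀ τ₁ : Matrix (Fin g) (Fin g) ℂ} (h₀ : τ₀ ∈ SiegelUpperHalf g)
    (h₁ : τ₁ ∈ SiegelUpperHalf g) {t : ℝ} (ht0 : 0 ≤ t) (ht1 : t ≤ 1) :
    τ₀ + (t : ℂ) • (τ₁ - τ₀) ∈ SiegelUpperHalf g := by
  obtain ⟨hs0, hp0⟩ := h₀
  obtain ⟨hs1, hp1⟩ := h₁
  constructor
  · rw [Matrix.transpose_add, Matrix.transpose_smul, Matrix.transpose_sub, hs0, hs1]
  · have hmap : (τ₀ + (t : ℂ) • (τ₁ - τ₀)).map Complex.im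
        = (1 - t) • (τ₀.map Complex.im) + t • (τ₁.map Complex.im) := by
      ext i j
      simp only [Matrix.map_apply, Matrix.add_apply, Matrix.smul_apply, Matrix.sub_apply,
        smul_eq_mul, Complex.add_im, Complex.mul_im, Complex.sub_im,
        Complex.ofReal_re, Complex.ofReal_im]
      ring
    rw [hmap]
    rcases eq_or_lt_of_le ht0 with h0 | h0
    · rw [← h0]
      simpa using hp0
    rcases eq_or_lt_of_le ht1 with h1 | h1
    · rw [h1]
      simpa using hp1
    exact Matrix.PosDef.add (posDef_smul hp0 (by linarith)) (posDef_smul hp1 h0)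

/-- existence of a point of the Siegel space where `det (Cτ + D) ≠ 0` -/
lemma exists_good_point (hg : 1 ≤ g) (C D : Matrix (Fin g) (Fin g) ℂ)
    (h1 : C * Dᵀ = D * Cᵀ) (h2 : ∃ X Y, IsUnit (C * X + D * Y)) :
    ∃ τ : Matrix (Fin g) (Fin g) ℂ, τ ∈ SiegelUpperHalf g ∧ (C * τ + D).det ≠ 0 := by
  obtain ⟨τs, hτs_symm, hτs_unit⟩ := exists_symm_isUnit C D h1 h2
  set W : Matrix (Fin g) (Fin g) ℂ := Complex.I • (1 : Matrix (Fin g) (Fin g) ℂ) with hW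
  have hWsym : Wᵀ = W := by rw [hW, Matrix.transpose_smul, Matrix.transpose_one]
  set q : ℂ → ℂ := fun z => ((C * τs + D) + z • (C * W)).det with hq
  have hqa : AnalyticOnNhd ℂ q (Set.univ : Set ℂ) := analytic_det_affine _ _
  have hq0 : q 0 ≠ 0 := by
    have : q 0 = (C * τs + D).det := by rw [hq]; simp
    rw [this]
    exact isUnit_iff_ne_zero.mp ((Matrix.isUnit_iff_isUnit_det _).mp hτs_unit)
  have hZ := countable_zeros hqa hq0
  have hB : {t : ℝ | q (t : ℂ) = 0}.Countable := hZ.preimage Complex.ofReal_injective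
  set M0 : Matrix (Fin g) (Fin g) ℝ := τs.map Complex.im with hM0def
  have hM0 : M0ᵀ = M0 := by
    rw [hM0def, ← Matrix.transpose_map, hτs_symm]
  obtain ⟨t, htI, htB⟩ := (hB.dense_compl ℝ).inter_open_nonempty
    (Set.Ioi (∑ i, ∑ j, |M0 i j|)) isOpen_Ioi ⟨(∑ i, ∑ j, |M0 i j|) + 1, by simp⟩
  refine ⟨τs + (t : ℂ) • W, ⟨?_, ?_⟩, ?_⟩
  · rw [Matrix.transpose_add, Matrix.transpose_smul, hτs_symm, hWsym]
  · have hmap : (τs + (t : ℂ) • W).map Complex.im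
        = M0 + t • (1 : Matrix (Fin g) (Fin g) ℝ) := by
      ext i j
      rw [hW]
      rcases eq_or_ne i j with rfl | hij
      · simp [hM0def, Matrix.map_apply, Matrix.add_apply, Matrix.smul_apply, Matrix.one_apply_eq,
          smul_eq_mul, Complex.add_im, Complex.mul_im]
      · simp [hM0def, Matrix.map_apply, Matrix.add_apply, Matrix.smul_apply, Matrix.one_apply_ne hij,
          smul_eq_mul, Complex.add_im]
    rw [hmap]
    exact posDef_add_smul_one hg hM0 htI
  · have hexp : C * (τs + (t : ℂ) • W) + D = (C * τs + D) + (t : ℂ) • (C * W) := by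
      rw [Matrix.mul_add, Matrix.mul_smul]
      abel
    rw [hexp]
    exact htB

end Statement9Aux

open Statement9Aux Set Filter Topology Metric in
/-- for every `δ ∈ Sp_{2g}(ℂ)`, the set
`U_δ = {τ ∈ H_g : Cτ + D invertible}` is open, dense, and connected in `H_g`. -/
theorem statement9 (g : ℕ) (hg : 1 ≤ g)
    (δ : Matrix (Fin g ⊕ Fin g) (Fin g ⊕ Fin g) ℂ) (hδ : δ ∈ SpSet g) :
    IsOpen {τ : SiegelUpperHalf g | IsUnit (jmat δ (τ : Matrix (Fin g) (Fin g) ℂ)).det} ∧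
    Dense {τ : SiegelUpperHalf g | IsUnit (jmat δ (τ : Matrix (Fin g) (Fin g) ℂ)).det} ∧
    IsConnected {τ : SiegelUpperHalf g |
      IsUnit (jmat δ (τ : Matrix (Fin g) (Fin g) ℂ)).det} := by
  classical
  set Cm : Matrix (Fin g) (Fin g) ℂ := δ.toBlocks₂₁ with hCm
  set Dm : Matrix (Fin g) (Fin g) ℂ := δ.toBlocks₂₂ with hDm
  -- extract the symplectic relations
  have hδ' : δ * Jm ℂ g * δᵀ = Jm ℂ g := hδ
  rw [show δ = fromBlocks δ.toBlocks₁₁ δ.toBlocks₁₂ δ.toBlocks₂₁ δ.toBlocks₂₂ from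
      (Matrix.fromBlocks_toBlocks δ).symm, Jm, Matrix.fromBlocks_transpose,
      Matrix.fromBlocks_multiply, Matrix.fromBlocks_multiply] at hδ'
  have h21 := congrArg Matrix.toBlocks₂₁ hδ'
  have h22 := congrArg Matrix.toBlocks₂₂ hδ'
  simp only [Matrix.toBlocks_fromBlocks₂₁, Matrix.toBlocks_fromBlocks₂₂, Matrix.mul_zero,
    Matrix.zero_mul, Matrix.mul_one, Matrix.one_mul, add_zero, zero_add, Matrix.mul_neg,
    Matrix.neg_mul,] at h21 h22
  rw [← hCm, ← hDm] at h21 h22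
  have hrel1 : Cm * δ.toBlocks₂₂ᵀ = Dm * δ.toBlocks₂₁ᵀ := by
    rw [← hDm, ← hCm]
    rw [neg_add_eq_zero] at h22
    exact h22.symm
  have hrel1' : Cm * Dmᵀ = Dm * Cmᵀ := by rw [hDm, hCm]; exact hrel1
  have hrel2 : ∃ X Y, IsUnit (Cm * X + Dm * Y) := by
    refine ⟨δ.toBlocks₁₂ᵀ, -δ.toBlocks₁₁ᵀ, ?_⟩
    have : Cm * δ.toBlocks₁₂ᵀ + Dm * (-δ.toBlocks₁₁ᵀ) = -1 := by
      rw [Matrix.mul_neg, add_comm]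
      exact h21
    rw [this]
    exact isUnit_one.neg
  -- the corresponding subset of the ambient matrix space
  set T : Set (Matrix (Fin g) (Fin g) ℂ) :=
    {σ | σ ∈ SiegelUpperHalf g ∧ (Cm * σ + Dm).det ≠ 0} with hT
  obtain ⟨τ₀, hτ₀H, hτ₀det⟩ := exists_good_point hg Cm Dm hrel1' hrel2
  have hτ₀T : τ₀ ∈ T := ⟨hτ₀H, hτ₀det⟩
  have hSet : {τ : SiegelUpperHalf g | IsUnit (jmat δ (τ : Matrix (Fin g) (Fin g) ℂ)).det}
      = Subtype.val ⁻¹' {σ : Matrix (Fin g) (Fin g) ℂ | (Cm * σ + Dm).det ≠ 0} := by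
    ext τ
    rw [Set.mem_setOf_eq, Set.mem_preimage, Set.mem_setOf_eq, isUnit_iff_ne_zero]
    exact Iff.rfl
  have hdetcont : Continuous fun σ : Matrix (Fin g) (Fin g) ℂ => (Cm * σ + Dm).det :=
    ((continuous_const.matrix_mul continuous_id).add continuous_const).matrix_det
  refine ⟨?_, ?_, ?_⟩
  · -- open
    rw [hSet]
    refine IsOpen.preimage continuous_subtype_val ?_
    have : {σ : Matrix (Fin g) (Fin g) ℂ | (Cm * σ + Dm).det ≠ 0}
        = (fun σ => (Cm * σ + Dm).det) ⁻¹' {w : ℂ | w ≠ 0} := rfl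
    rw [this]
    exact IsOpen.preimage hdetcont isOpen_ne
  · -- dense
    intro x
    have hxH : (x : Matrix (Fin g) (Fin g) ℂ) ∈ SiegelUpperHalf g := x.2
    have hclosT : (x : Matrix (Fin g) (Fin g) ℂ) ∈ closure T := by
      set Δ : Matrix (Fin g) (Fin g) ℂ := τ₀ - (x : Matrix (Fin g) (Fin g) ℂ) with hΔ
      set σf : ℝ → Matrix (Fin g) (Fin g) ℂ :=
        fun t => (x : Matrix (Fin g) (Fin g) ℂ) + (t : ℂ) • Δ with hσf
      set r : ℂ → ℂ := fun z => ((Cm * (x : Matrix (Fin g) (Fin g) ℂ) + Dm) + z • (Cm * Δ)).det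
        with hr
      have hra : AnalyticOnNhd ℂ r (Set.univ : Set ℂ) := analytic_det_affine _ _
      have hrz : ∀ t : ℝ, (Cm * σf t + Dm).det = r (t : ℂ) := by
        intro t
        simp only [hr, hσf]
        congr 1
        rw [Matrix.mul_add, Matrix.mul_smul]
        abel
      have hr1 : r 1 ≠ 0 := by
        have he : (Cm * (x : Matrix (Fin g) (Fin g) ℂ) + Dm) + (1 : ℂ) • (Cm * Δ)
            = Cm * τ₀ + Dm := by
          rw [one_smul, hΔ, Matrix.mul_sub]
          abel
        rw [hr]
        simp only [he]
        exact hτ₀det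
      have hB : {t : ℝ | r (t : ℂ) = 0}.Countable :=
        (countable_zeros hra hr1).preimage Complex.ofReal_injective
      have hfreq : ∃ᶠ t in 𝓝[Set.Ioo (0:ℝ) 1] 0, σf t ∈ T := by
        rw [Filter.frequently_iff]
        intro U hU
        obtain ⟨V, hVopen, hV0, hVU⟩ := mem_nhdsWithin.mp hU
        obtain ⟨ε, hε, hball⟩ := Metric.isOpen_iff.mp hVopen 0 hV0
        have hVIoo_ne : (V ∩ Set.Ioo (0:ℝ) 1).Nonempty := by
          refine ⟨min ε 1 / 2, hball ?_, ?_, ?_⟩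
          · rw [Metric.mem_ball, Real.dist_eq, sub_zero, abs_of_pos (by positivity)]
            calc min ε 1 / 2 ≤ ε / 2 := by gcongr; exact min_le_left _ _
            _ < ε := by linarith
          · positivity
          · calc min ε 1 / 2 ≤ 1 / 2 := by gcongr; exact min_le_right _ _
            _ < 1 := by norm_num
        obtain ⟨t, htV, htB⟩ := (hB.dense_compl ℝ).inter_open_nonempty _
          (hVopen.inter isOpen_Ioo) hVIoo_ne
        refine ⟨t, hVU ⟨htV.1, htV.2⟩, ?_, ?_⟩
        · exact mem_H_segment hxH hτ₀H htV.2.1.le htV.2.2.le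
        · rw [hrz t]
          exact htB
      have htend : Filter.Tendsto σf (𝓝[Set.Ioo (0:ℝ) 1] 0)
          (𝓝 (x : Matrix (Fin g) (Fin g) ℂ)) := by
        have hcont : Continuous σf := by
          rw [hσf]
          exact continuous_const.add ((Complex.continuous_ofReal).smul continuous_const)
        have h0 := (hcont.tendsto 0).mono_left (nhdsWithin_le_nhds (s := Set.Ioo (0:ℝ) 1))
        have hval : σf 0 = (x : Matrix (Fin g) (Fin g) ℂ) := by
          rw [hσf]
          simp
        rwa [hval] at h0
      exact mem_closure_of_frequently_of_tendsto hfreq htend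
    rw [mem_closure_iff_nhds]
    intro N hN
    obtain ⟨W, hW, hWN⟩ := (mem_nhds_subtype _ _ _).mp hN
    obtain ⟨σ, hσW, hσT⟩ := mem_closure_iff_nhds.mp hclosT W hW
    refine ⟨⟨σ, hσT.1⟩, hWN hσW, ?_⟩
    show IsUnit (jmat δ σ).det
    have : jmat δ σ = Cm * σ + Dm := by rw [jmat, ← hCm, ← hDm]
    rw [this]
    exact isUnit_iff_ne_zero.mpr hσT.2
  · -- connected
    have hjoin : ∀ τa τb, τa ∈ T → τb ∈ T → JoinedIn T τa τb := by
      intro τa τb ha hb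
      set Δ : Matrix (Fin g) (Fin g) ℂ := τb - τa with hΔ
      set F : ℂ → Matrix (Fin g) (Fin g) ℂ := fun z => τa + z • Δ with hF
      have hsymz : ∀ z, (F z)ᵀ = F z := by
        intro z
        rw [hF]
        show (τa + z • Δ)ᵀ = τa + z • Δ
        rw [Matrix.transpose_add, Matrix.transpose_smul, hΔ, Matrix.transpose_sub,
          ha.1.1, hb.1.1]
      have hFcont : Continuous F := by
        rw [hF]
        exact continuous_const.add (continuous_id.smul continuous_const)
      have hGopen : IsOpen {z : ℂ | ((F z).map Complex.im).PosDef} := by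
        refine isOpen_posDef_family hg (hFcont.matrix_map Complex.continuous_im) fun z => ?_
        rw [← Matrix.transpose_map, hsymz z]
      set q : ℂ → ℂ := fun z => ((Cm * τa + Dm) + z • (Cm * Δ)).det with hq
      have hqdet : ∀ z, (Cm * F z + Dm).det = q z := by
        intro z
        simp only [hq, hF]
        congr 1
        rw [Matrix.mul_add, Matrix.mul_smul]
        abel
      have hqa : AnalyticOnNhd ℂ q (Set.univ : Set ℂ) := analytic_det_affine _ _
      have hF0 : F 0 = τa := by rw [hF]; simp
      have hF1 : F 1 = τb := by rw [hF, hΔ]; simp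
      have hq0 : q 0 ≠ 0 := by rw [← hqdet 0, hF0]; exact ha.2
      have hq1 : q 1 ≠ 0 := by rw [← hqdet 1, hF1]; exact hb.2
      have hZc := countable_zeros hqa hq0
      have hseg : segment ℝ (0:ℂ) 1 ⊆ {z : ℂ | ((F z).map Complex.im).PosDef} := by
        intro z hz
        rw [segment_eq_image] at hz
        obtain ⟨θ, hθ, rfl⟩ := hz
        simp only [smul_zero, zero_add, Complex.real_smul, mul_one]
        exact (mem_H_segment ha.1 hb.1 hθ.1 hθ.2).2
      have hsegcomp : IsCompact (segment ℝ (0:ℂ) 1) := by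
        rw [segment_eq_image]
        exact isCompact_Icc.image
          (((continuous_const.sub continuous_id).smul continuous_const).add
            (continuous_id.smul continuous_const))
      obtain ⟨ε, hε, hthick⟩ := hsegcomp.exists_thickening_subset_open hGopen hseg
      have hjoin0 : JoinedIn (Metric.thickening ε (segment ℝ (0:ℂ) 1) \ {z | q z = 0}) 0 1 := by
        refine joinedIn_convex_compl_countable ((convex_segment _ _).thickening _)
          Metric.isOpen_thickening hZc ?_ hq0 ?_ hq1
        · exact Metric.self_subset_thickening hε _ (left_mem_segment ℝ _ _)
        · exact Metric.self_subset_thickening hε _ (right_mem_segment ℝ _ _)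
      have hsub : Metric.thickening ε (segment ℝ (0:ℂ) 1) \ {z | q z = 0} ⊆ F ⁻¹' T := by
        intro z hz
        refine ⟨⟨hsymz z, hthick hz.1⟩, ?_⟩
        rw [hqdet z]
        exact hz.2
      obtain ⟨γ, hγ⟩ := hjoin0.mono hsub
      exact ⟨(γ.map hFcont).cast hF0.symm hF1.symm, fun s => hγ s⟩
    have hpath : IsPathConnected
        {τ : SiegelUpperHalf g | IsUnit (jmat δ (τ : Matrix (Fin g) (Fin g) ℂ)).det} := by
      have hjj : jmat δ τ₀ = Cm * τ₀ + Dm := by rw [jmat, ← hCm, ← hDm]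
      refine ⟨⟨τ₀, hτ₀H⟩, ?_, ?_⟩
      · show IsUnit (jmat δ τ₀).det
        rw [hjj]
        exact isUnit_iff_ne_zero.mpr hτ₀det
      · intro y hy
        have hyT : (y : Matrix (Fin g) (Fin g) ℂ) ∈ T := by
          refine ⟨y.2, ?_⟩
          have hjy : jmat δ (y : Matrix (Fin g) (Fin g) ℂ)
              = Cm * (y : Matrix (Fin g) (Fin g) ℂ) + Dm := by rw [jmat, ← hCm, ← hDm]
          have := hy
          rw [Set.mem_setOf_eq, hjy, isUnit_iff_ne_zero] at this
          exact this
        obtain ⟨γ, hγ⟩ := hjoin _ _ hτ₀T hyT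
        refine ⟨⟨⟨fun s => ⟨γ s, (hγ s).1⟩, ?_⟩, ?_, ?_⟩, fun s => ?_⟩
        · exact γ.continuous.subtype_mk _
        · exact Subtype.ext (by simp)
        · exact Subtype.ext (by simp)
        · show IsUnit (jmat δ (γ s : Matrix (Fin g) (Fin g) ℂ)).det
          have hjs : jmat δ (γ s : Matrix (Fin g) (Fin g) ℂ)
              = Cm * (γ s : Matrix (Fin g) (Fin g) ℂ) + Dm := by rw [jmat, ← hCm, ← hDm]
          rw [hjs]
          exact isUnit_iff_ne_zero.mpr (hγ s).2
    exact hpath.isConnected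
end
end

section
/- Let g ≥ 1. The group Sp_{2g}(ℤ) is Zariski-dense in Sp_{2g,ℂ}: for every polynomial P with complex coefficients in the 4g² matrix entries, if P vanishes at every integer matrix M ∈ M_{2g}(ℤ) satisfying M J Mᵀ = J (evaluated via the inclusion ℤ ⊆ ℂ), then P vanishes at every complex matrix N ∈ M_{2g}(ℂ) satisfying N J Nᵀ = J. -/
open Matrix

noncomputable section

namespace S12

variable {R : Type*} [CommRing R] {g : ℕ}

lemma Jm_transpose : (Jm R g)ᵀ = -(Jm R g) := by
  rw [Jm, fromBlocks_transpose, fromBlocks_neg]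
  simp


lemma Jm_mul_Jm : Jm R g * Jm R g = -1 := by
  simp [Jm, fromBlocks_multiply]
  rw [← fromBlocks_one, fromBlocks_neg]
  simp

-- vecMulVec helper lemmas
lemma vecMulVec_mul (a : Fin g ⊕ Fin g → R) (b : Fin g ⊕ Fin g → R)
    (M : Matrix (Fin g ⊕ Fin g) (Fin g ⊕ Fin g) R) :
    vecMulVec a b * M = vecMulVec a (vecMul b M) := by
  ext i j
  simp [vecMulVec_apply, mul_apply, vecMul, dotProduct, Finset.mul_sum, mul_add, mul_assoc]

lemma mul_vecMulVec (a b : Fin g ⊕ Fin g → R)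
    (M : Matrix (Fin g ⊕ Fin g) (Fin g ⊕ Fin g) R) :
    M * vecMulVec a b = vecMulVec (M.mulVec a) b := by
  ext i j
  simp [vecMulVec_apply, mul_apply, mulVec, dotProduct, Finset.sum_mul, add_mul, mul_assoc,
    mul_comm, mul_left_comm]
  ring_nf
  simp only [Finset.mul_sum]
  ring_nf

lemma vecMulVec_mul_vecMulVec (a b c d : Fin g ⊕ Fin g → R) :
    vecMulVec a b * vecMulVec c d = (b ⬝ᵥ c) • vecMulVec a d := by
  ext i j
  simp only [vecMulVec_apply, mul_apply, dotProduct, Matrix.smul_apply, smul_eq_mul,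
    Finset.sum_mul, add_mul]
  congr 1 <;> · funext k; ring

lemma vecMulVec_transpose (a b : Fin g ⊕ Fin g → R) :
    (vecMulVec a b)ᵀ = vecMulVec b a := by
  ext i j; simp [vecMulVec_apply, mul_comm]

lemma vecMulVec_mulVec (a b x : Fin g ⊕ Fin g → R) :
    (vecMulVec a b).mulVec x = (b ⬝ᵥ x) • a := by
  ext i
  simp only [vecMulVec_apply, mulVec, dotProduct, Pi.smul_apply, smul_eq_mul,
    Finset.sum_mul, add_mul]
  congr 1 <;> · funext k; ring

end S12

namespace S12
variable {R : Type*} [CommRing R] {g : ℕ}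

lemma Jm_mulVec (v : Fin g ⊕ Fin g → R) :
    (Jm R g).mulVec v = Sum.elim (fun i => v (Sum.inr i)) (fun i => -v (Sum.inl i)) := by
  ext i
  cases i <;>
    simp [Jm, mulVec, dotProduct, Fintype.sum_sum_type, fromBlocks_apply₁₁, fromBlocks_apply₁₂,
      fromBlocks_apply₂₁, fromBlocks_apply₂₂, one_apply, Finset.sum_ite_eq, neg_apply]

lemma vJv (v : Fin g ⊕ Fin g → R) : v ⬝ᵥ (Jm R g).mulVec v = 0 := by
  simp only [Jm_mulVec, dotProduct, Fintype.sum_sum_type, Sum.elim_inl, Sum.elim_inr, mul_neg]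
  rw [Finset.sum_neg_distrib, ← Finset.sum_neg_distrib]
  rw [← Finset.sum_add_distrib]
  apply Finset.sum_eq_zero
  intro i _
  ring

lemma wJ (v : Fin g ⊕ Fin g → R) : vecMul ((Jm R g).mulVec v) (Jm R g) = v := by
  rw [← mulVec_transpose, Jm_transpose, neg_mulVec, mulVec_mulVec, Jm_mul_Jm, neg_mulVec,
    neg_neg, one_mulVec]

lemma JJv (v : Fin g ⊕ Fin g → R) : (Jm R g).mulVec ((Jm R g).mulVec v) = -v := by
  rw [mulVec_mulVec, Jm_mul_Jm, neg_mulVec, one_mulVec]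

lemma vecMulVec_neg_left (a b : Fin g ⊕ Fin g → R) :
    vecMulVec (-a) b = -vecMulVec a b := by
  ext i j; simp [vecMulVec_apply]

variable (R g) in
/-- Symplectic transvection matrix: `x ↦ x + t ω(x,v) v`. -/
def Tmat (v : Fin g ⊕ Fin g → R) (t : R) : Matrix (Fin g ⊕ Fin g) (Fin g ⊕ Fin g) R :=
  1 + t • vecMulVec v ((Jm R g).mulVec v)

lemma Tmat_transpose (v : Fin g ⊕ Fin g → R) (t : R) :
    (Tmat R g v t)ᵀ = 1 + t • vecMulVec ((Jm R g).mulVec v) v := by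
  simp [Tmat, transpose_add, transpose_smul, vecMulVec_transpose]

lemma Tmat_symplectic (v : Fin g ⊕ Fin g → R) (t : R) :
    Tmat R g v t * Jm R g * (Tmat R g v t)ᵀ = Jm R g := by
  set w := (Jm R g).mulVec v with hw
  have hA : vecMulVec v w * Jm R g = vecMulVec v v := by rw [vecMulVec_mul, hw, wJ]
  have hB : Jm R g * vecMulVec w v = -vecMulVec v v := by
    rw [mul_vecMulVec, hw, JJv, vecMulVec_neg_left]
  have hC : vecMulVec v v * vecMulVec w v = 0 := by
    rw [vecMulVec_mul_vecMulVec, hw, vJv, zero_smul]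
  rw [Tmat_transpose, Tmat]
  simp only [add_mul, mul_add, one_mul, mul_one, smul_mul_assoc, mul_smul_comm, smul_smul]
  rw [hA, hB, hC]
  module

lemma Tmat_mul_Tmat_neg (v : Fin g ⊕ Fin g → R) (t : R) :
    Tmat R g v t * Tmat R g v (-t) = 1 := by
  set w := (Jm R g).mulVec v with hw
  have hC : vecMulVec v w * vecMulVec v w = 0 := by
    rw [vecMulVec_mul_vecMulVec, hw, dotProduct_comm, vJv, zero_smul]
  rw [Tmat, Tmat]
  simp only [add_mul, mul_add, one_mul, mul_one, smul_mul_assoc, mul_smul_comm, smul_smul]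
  rw [hC]
  simp only [smul_zero, neg_smul, add_zero]
  module

lemma Tmat_mulVec (v x : Fin g ⊕ Fin g → R) (t : R) :
    (Tmat R g v t).mulVec x = x + (t * ((Jm R g).mulVec v ⬝ᵥ x)) • v := by
  rw [Tmat, add_mulVec, one_mulVec, smul_mulVec, vecMulVec_mulVec, smul_smul]

end S12

namespace S12
variable {R : Type*} [CommRing R] {g : ℕ}

/-- symplectic predicate -/
def Sp (M : Matrix (Fin g ⊕ Fin g) (Fin g ⊕ Fin g) R) : Prop :=
  M * Jm R g * Mᵀ = Jm R g

lemma Sp.one : Sp (1 : Matrix (Fin g ⊕ Fin g) (Fin g ⊕ Fin g) R) := by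
  simp [Sp]

lemma Sp.mul {M N : Matrix (Fin g ⊕ Fin g) (Fin g ⊕ Fin g) R} (hM : Sp M) (hN : Sp N) :
    Sp (M * N) := by
  unfold Sp at *
  rw [transpose_mul, show M * N * Jm R g * (Nᵀ * Mᵀ) = M * (N * Jm R g * Nᵀ) * Mᵀ by
    simp only [mul_assoc], hN, hM]

lemma Sp.Tmat (v : Fin g ⊕ Fin g → R) (t : R) : Sp (S12.Tmat R g v t) :=
  Tmat_symplectic v t

lemma Sp.right_inv {M : Matrix (Fin g ⊕ Fin g) (Fin g ⊕ Fin g) R} (h : Sp M) :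
    M * -(Jm R g * Mᵀ * Jm R g) = 1 := by
  have : M * Jm R g * Mᵀ * Jm R g = -1 := by
    rw [h, Jm_mul_Jm]
  rw [mul_neg, ← mul_assoc, ← mul_assoc, this, neg_neg]

lemma Sp.left_inv {M : Matrix (Fin g ⊕ Fin g) (Fin g ⊕ Fin g) R} (h : Sp M) :
    -(Jm R g * Mᵀ * Jm R g) * M = 1 :=
  mul_eq_one_comm.mp h.right_inv

lemma Sp.transpose {M : Matrix (Fin g ⊕ Fin g) (Fin g ⊕ Fin g) R} (h : Sp M) :
    Mᵀ * Jm R g * M = Jm R g := by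
  have h1 : Jm R g * (Mᵀ * Jm R g * M) = -1 := by
    have := h.left_inv
    rw [neg_mul] at this
    have h2 : Jm R g * Mᵀ * Jm R g * M = -1 := by
      rw [← neg_neg (Jm R g * Mᵀ * Jm R g * M), this]
    rw [← h2]; simp only [mul_assoc]
  calc Mᵀ * Jm R g * M = (-(Jm R g * Jm R g)) * (Mᵀ * Jm R g * M) := by
        rw [Jm_mul_Jm, neg_neg, one_mul]
    _ = -(Jm R g * (Jm R g * (Mᵀ * Jm R g * M))) := by rw [neg_mul, mul_assoc]
    _ = Jm R g := by rw [h1, mul_neg_one, neg_neg]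

lemma Sp.preserves {M : Matrix (Fin g ⊕ Fin g) (Fin g ⊕ Fin g) R} (h : Sp M)
    (x y : Fin g ⊕ Fin g → R) :
    M.mulVec x ⬝ᵥ (Jm R g).mulVec (M.mulVec y) = x ⬝ᵥ (Jm R g).mulVec y := by
  have e1 : M.mulVec x = vecMul x Mᵀ := by rw [← mulVec_transpose, transpose_transpose]
  rw [mulVec_mulVec, dotProduct_mulVec, e1, vecMul_vecMul, ← mul_assoc, h.transpose,
    ← dotProduct_mulVec]

end S12

namespace S12
open Module
variable {g : ℕ}

/-- the symplectic form -/
def om (a b : Fin g ⊕ Fin g → ℂ) : ℂ := a ⬝ᵥ (Jm ℂ g).mulVec b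

lemma om_antisymm (a b : Fin g ⊕ Fin g → ℂ) : om a b = -om b a := by
  unfold om
  rw [dotProduct_mulVec, dotProduct_mulVec, dotProduct_comm]
  have : vecMul a (Jm ℂ g) = -((Jm ℂ g).mulVec a) := by
    rw [← mulVec_transpose, Jm_transpose, neg_mulVec]
  rw [this]
  simp [dotProduct_neg, dotProduct_comm, dotProduct_mulVec, neg_dotProduct]

lemma om_self (a : Fin g ⊕ Fin g → ℂ) : om a a = 0 := vJv a

lemma om_sub_right (a b c : Fin g ⊕ Fin g → ℂ) : om a (b - c) = om a b - om a c := by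
  unfold om; rw [mulVec_sub, dotProduct_sub]

lemma om_add_right (a b c : Fin g ⊕ Fin g → ℂ) : om a (b + c) = om a b + om a c := by
  unfold om; rw [mulVec_add, dotProduct_add]

lemma om_smul_right (a : Fin g ⊕ Fin g → ℂ) (t : ℂ) (b : Fin g ⊕ Fin g → ℂ) :
    om a (t • b) = t * om a b := by
  unfold om; rw [mulVec_smul, dotProduct_smul, smul_eq_mul]

lemma Sp.om_preserves {S : Matrix (Fin g ⊕ Fin g) (Fin g ⊕ Fin g) ℂ} (h : Sp S)
    (x y : Fin g ⊕ Fin g → ℂ) : om (S.mulVec x) (S.mulVec y) = om x y :=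
  h.preserves x y

lemma Tmat_mulVec' (v x : Fin g ⊕ Fin g → ℂ) (t : ℂ) :
    (Tmat ℂ g v t).mulVec x = x + (t * om x v) • v := by
  rw [Tmat_mulVec]
  congr 2
  rw [om, dotProduct_comm]

/-- being a product of symplectic transvections -/
def IsProdT (S : Matrix (Fin g ⊕ Fin g) (Fin g ⊕ Fin g) ℂ) : Prop :=
  ∃ L : List ((Fin g ⊕ Fin g → ℂ) × ℂ), S = (L.map fun p => Tmat ℂ g p.1 p.2).prod

lemma IsProdT.one : IsProdT (1 : Matrix (Fin g ⊕ Fin g) (Fin g ⊕ Fin g) ℂ) :=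
  ⟨[], rfl⟩

lemma IsProdT.cons {S} (v : Fin g ⊕ Fin g → ℂ) (t : ℂ) (h : IsProdT S) :
    IsProdT (Tmat ℂ g v t * S) := by
  obtain ⟨L, rfl⟩ := h
  exact ⟨(v, t) :: L, by simp⟩

open Classical in
/-- induction measure -/
noncomputable def mu (S : Matrix (Fin g ⊕ Fin g) (Fin g ⊕ Fin g) ℂ) : ℕ :=
  2 * (Fintype.card (Fin g ⊕ Fin g) -
      finrank ℂ (LinearMap.ker (S - 1).mulVecLin)) +
    (if ∀ x, om x ((S - 1).mulVec x) = 0 then 1 else 0)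

lemma matrix_eq_zero_of_mulVec {m : Type*} [Fintype m] [DecidableEq m]
    (A : Matrix m m ℂ) (h : ∀ x, A.mulVec x = 0) : A = 0 := by
  ext i j
  have := congrFun (h (Pi.single j 1)) i
  rw [mulVec_single] at this
  simpa using this

lemma fix_ortho {S : Matrix (Fin g ⊕ Fin g) (Fin g ⊕ Fin g) ℂ} (hS : Sp S)
    (x₀ y : Fin g ⊕ Fin g → ℂ) (hy : S.mulVec y = y) :
    om y ((S - 1).mulVec x₀) = 0 := by
  rw [sub_mulVec, one_mulVec, om_sub_right]
  have : om y (S.mulVec x₀) = om (S.mulVec y) (S.mulVec x₀) := by rw [hy]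
  rw [this, hS.om_preserves, sub_self]

lemma mem_ker_TS {S : Matrix (Fin g ⊕ Fin g) (Fin g ⊕ Fin g) ℂ} (hS : Sp S)
    (x₀ : Fin g ⊕ Fin g → ℂ) (t : ℂ)
    (y : Fin g ⊕ Fin g → ℂ) (hy : (S - 1).mulVec y = 0) :
    (Tmat ℂ g ((S - 1).mulVec x₀) t * S - 1).mulVec y = 0 := by
  have hy' : S.mulVec y = y := by
    have := hy
    rw [sub_mulVec, one_mulVec, sub_eq_zero] at this
    exact this
  rw [sub_mulVec, one_mulVec, ← mulVec_mulVec, hy', Tmat_mulVec']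
  have h0 : om y ((S - 1).mulVec x₀) = 0 := fix_ortho hS x₀ y hy'
  rw [h0, mul_zero, zero_smul, add_zero, sub_self]

lemma exists_dot_ne {u₁ u₂ : Fin g ⊕ Fin g → ℂ} (h1 : u₁ ≠ 0) (h2 : u₂ ≠ 0) :
    ∃ y : Fin g ⊕ Fin g → ℂ, y ⬝ᵥ u₁ ≠ 0 ∧ y ⬝ᵥ u₂ ≠ 0 := by
  obtain ⟨j₁, hj₁⟩ : ∃ j, u₁ j ≠ 0 := by
    by_contra hc; push_neg at hc; exact h1 (funext hc)
  obtain ⟨j₂, hj₂⟩ : ∃ j, u₂ j ≠ 0 := by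
    by_contra hc; push_neg at hc; exact h2 (funext hc)
  set y₁ : Fin g ⊕ Fin g → ℂ := Pi.single j₁ 1
  set y₂ : Fin g ⊕ Fin g → ℂ := Pi.single j₂ 1
  have e11 : y₁ ⬝ᵥ u₁ = u₁ j₁ := by simp [y₁, single_dotProduct]
  have e22 : y₂ ⬝ᵥ u₂ = u₂ j₂ := by simp [y₂, single_dotProduct]
  by_cases h12 : y₁ ⬝ᵥ u₂ ≠ 0
  · exact ⟨y₁, by rw [e11]; exact hj₁, h12⟩
  by_cases h21 : y₂ ⬝ᵥ u₁ ≠ 0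
  · exact ⟨y₂, h21, by rw [e22]; exact hj₂⟩
  push_neg at h12 h21
  refine ⟨y₁ + y₂, ?_, ?_⟩
  · rw [add_dotProduct, h21, add_zero, e11]; exact hj₁
  · rw [add_dotProduct, h12, zero_add, e22]; exact hj₂

end S12

namespace S12
open Module
variable {g : ℕ}

lemma Sp.transpose_mulVec_injective {S : Matrix (Fin g ⊕ Fin g) (Fin g ⊕ Fin g) ℂ}
    (h : Sp S) {w : Fin g ⊕ Fin g → ℂ} (hw : Sᵀ.mulVec w = 0) : w = 0 := by
  have hright : Sᵀ * (Jm ℂ g * S * -Jm ℂ g) = 1 := by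
    have h1 : Sᵀ * Jm ℂ g * S * -Jm ℂ g = Jm ℂ g * -Jm ℂ g := by rw [h.transpose]
    have h2 : Jm ℂ g * -Jm ℂ g = 1 := by rw [mul_neg, Jm_mul_Jm, neg_neg]
    rw [← h2, ← h1]; simp only [mul_assoc]
  have hleft : (Jm ℂ g * S * -Jm ℂ g) * Sᵀ = 1 := mul_eq_one_comm.mp hright
  calc w = ((Jm ℂ g * S * -Jm ℂ g) * Sᵀ).mulVec w := by rw [hleft, one_mulVec]
    _ = (Jm ℂ g * S * -Jm ℂ g).mulVec (Sᵀ.mulVec w) := by rw [← mulVec_mulVec]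
    _ = 0 := by rw [hw, mulVec_zero]

lemma Jm_mulVec_ne_zero {v : Fin g ⊕ Fin g → ℂ} (hv : v ≠ 0) :
    (Jm ℂ g).mulVec v ≠ 0 := by
  intro hc
  apply hv
  have := JJv (R := ℂ) (g := g) v
  rw [hc, mulVec_zero] at this
  simpa using this.symm

lemma mulVec_dot (S : Matrix (Fin g ⊕ Fin g) (Fin g ⊕ Fin g) ℂ)
    (y w : Fin g ⊕ Fin g → ℂ) : (S.mulVec y) ⬝ᵥ w = y ⬝ᵥ (Sᵀ.mulVec w) := by
  rw [dotProduct_mulVec, vecMul_transpose]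

lemma om_add_left (a b c : Fin g ⊕ Fin g → ℂ) : om (a + b) c = om a c + om b c := by
  unfold om; rw [add_dotProduct]

lemma Tmat_neg_mul (v : Fin g ⊕ Fin g → ℂ) (t : ℂ) :
    Tmat ℂ g v (-t) * Tmat ℂ g v t = 1 := by
  have := Tmat_mul_Tmat_neg (R := ℂ) (g := g) v (-t)
  rwa [neg_neg] at this

open Classical in
lemma gen_aux : ∀ (k : ℕ) (S : Matrix (Fin g ⊕ Fin g) (Fin g ⊕ Fin g) ℂ),
    Sp S → mu S ≤ k → IsProdT S := by
  intro k
  induction k with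
  | zero =>
    intro S hS hmu
    -- mu S = 0 forces ker = ⊤, i.e. S = 1
    have h2 : Fintype.card (Fin g ⊕ Fin g) -
        finrank ℂ (LinearMap.ker (S - 1).mulVecLin) = 0 := by
      unfold mu at hmu; omega
    have hfr : finrank ℂ (LinearMap.ker (S - 1).mulVecLin) =
        finrank ℂ (Fin g ⊕ Fin g → ℂ) := by
      have hle := Submodule.finrank_le (LinearMap.ker (S - 1).mulVecLin)
      rw [Module.finrank_fintype_fun_eq_card] at *
      omega
    have htop : LinearMap.ker (S - 1).mulVecLin = ⊤ := Submodule.eq_top_of_finrank_eq hfr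
    have hz : S - 1 = 0 := by
      apply matrix_eq_zero_of_mulVec
      intro x
      have : x ∈ LinearMap.ker (S - 1).mulVecLin := htop ▸ Submodule.mem_top
      exact this
    have : S = 1 := by rwa [sub_eq_zero] at hz
    rw [this]; exact IsProdT.one
  | succ k ih =>
    intro S hS hmu
    by_cases hS1 : S = 1
    · rw [hS1]; exact IsProdT.one
    by_cases hq : ∀ x, om x ((S - 1).mulVec x) = 0
    · -- exceptional case
      -- find x₀ with M x₀ ≠ 0
      have hMne : S - 1 ≠ 0 := fun hc => hS1 (by rwa [sub_eq_zero] at hc)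
      obtain ⟨x₀, hx₀⟩ : ∃ x₀, (S - 1).mulVec x₀ ≠ 0 := by
        by_contra hc
        push_neg at hc
        exact hMne (matrix_eq_zero_of_mulVec (S - 1) hc)
      set v := (S - 1).mulVec x₀ with hv
      have hu1 : (Jm ℂ g).mulVec v ≠ 0 := Jm_mulVec_ne_zero hx₀
      have hu2 : Sᵀ.mulVec ((Jm ℂ g).mulVec v) ≠ 0 := by
        intro hc
        exact hu1 (hS.transpose_mulVec_injective hc)
      obtain ⟨y, hy1, hy2⟩ := exists_dot_ne hu1 hu2
      -- hy1 : y ⬝ᵥ J v ≠ 0  i.e. om y v ≠ 0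
      have hy1' : om y v ≠ 0 := hy1
      have hy2' : om (S.mulVec y) v ≠ 0 := by
        unfold om
        rw [mulVec_dot]
        exact hy2
      set T := Tmat ℂ g v 1 with hT
      set S' := T * S with hS'
      have hSpS' : Sp S' := (Sp.Tmat v 1).mul hS
      -- ker grows (weakly)
      have hker : LinearMap.ker ((S - 1).mulVecLin) ≤ LinearMap.ker ((S' - 1).mulVecLin) := by
        intro z hz
        simp only [LinearMap.mem_ker, mulVecLin_apply] at hz ⊢
        exact mem_ker_TS hS x₀ 1 z hz
      -- S' is non-exceptional at y
      have hq' : ¬ (∀ x, om x ((S' - 1).mulVec x) = 0) := by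
        intro hall
        apply hy2'
        have e1 : (S' - 1).mulVec y = (S - 1).mulVec y + om (S.mulVec y) v • v := by
          rw [sub_mulVec, one_mulVec, hS', ← mulVec_mulVec, Tmat_mulVec', one_mul,
            sub_mulVec, one_mulVec]
          abel
        have e2 := hall y
        rw [e1, om_add_right, om_smul_right, hq y, zero_add] at e2
        rcases mul_eq_zero.mp e2 with h | h
        · exact absurd h (by exact fun hh => hy2' hh)
        · exact absurd h hy1'
      -- measure decreases
      have hmono : finrank ℂ (LinearMap.ker ((S - 1).mulVecLin)) ≤
          finrank ℂ (LinearMap.ker ((S' - 1).mulVecLin)) := Submodule.finrank_mono hker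
      have hmuS : mu S = 2 * (Fintype.card (Fin g ⊕ Fin g) -
          finrank ℂ (LinearMap.ker ((S - 1).mulVecLin))) + 1 := by
        unfold mu; rw [if_pos hq]
      have hmuS' : mu S' = 2 * (Fintype.card (Fin g ⊕ Fin g) -
          finrank ℂ (LinearMap.ker ((S' - 1).mulVecLin))) := by
        unfold mu; rw [if_neg hq', add_zero]
      have hrank_le : finrank ℂ (LinearMap.ker ((S' - 1).mulVecLin)) ≤
          Fintype.card (Fin g ⊕ Fin g) := by
        have := Submodule.finrank_le (LinearMap.ker ((S' - 1).mulVecLin))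
        rwa [Module.finrank_fintype_fun_eq_card] at this
      have hdec : mu S' ≤ k := by omega
      have hP' := ih S' hSpS' hdec
      have : S = Tmat ℂ g v (-1) * S' := by
        rw [hS', ← mul_assoc, hT, Tmat_neg_mul, one_mul]
      rw [this]
      exact hP'.cons v (-1)
    · -- main case: ∃ x₀, om x₀ (M x₀) ≠ 0
      push_neg at hq
      obtain ⟨x₀, hx₀⟩ := hq
      set v := (S - 1).mulVec x₀ with hv
      have hvne : v ≠ 0 := by
        intro hcc
        apply hx₀
        rw [hcc]
        unfold om
        rw [mulVec_zero, dotProduct_zero]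
      set c := om x₀ v with hc
      set t : ℂ := -c⁻¹ with ht
      set T := Tmat ℂ g v t with hT
      set S' := T * S with hS'
      have hSpS' : Sp S' := (Sp.Tmat v t).mul hS
      have hker : LinearMap.ker ((S - 1).mulVecLin) ≤ LinearMap.ker ((S' - 1).mulVecLin) := by
        intro z hz
        simp only [LinearMap.mem_ker, mulVecLin_apply] at hz ⊢
        exact mem_ker_TS hS x₀ t z hz
      -- x₀ also in new kernel
      have hx₀ker : x₀ ∈ LinearMap.ker ((S' - 1).mulVecLin) := by
        simp only [LinearMap.mem_ker, mulVecLin_apply]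
        rw [sub_mulVec, one_mulVec, hS', ← mulVec_mulVec, Tmat_mulVec']
        have hSx : S.mulVec x₀ = x₀ + v := by
          rw [hv, sub_mulVec, one_mulVec]; abel
        rw [hSx]
        have : om (x₀ + v) v = c := by
          rw [om_add_left, om_self, add_zero, hc]
        rw [this, ht]
        have hcne : c ≠ 0 := hx₀
        rw [neg_mul, inv_mul_cancel₀ hcne]
        simp
      have hx₀notker : x₀ ∉ LinearMap.ker ((S - 1).mulVecLin) := by
        simp only [LinearMap.mem_ker, mulVecLin_apply]
        rw [← hv]; exact hvne
      -- strict growth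
      have hlt : LinearMap.ker ((S - 1).mulVecLin) < LinearMap.ker ((S' - 1).mulVecLin) := by
        apply lt_of_le_of_ne hker
        intro hEq
        rw [hEq] at hx₀notker
        exact hx₀notker hx₀ker
      have hstrict : finrank ℂ (LinearMap.ker ((S - 1).mulVecLin)) <
          finrank ℂ (LinearMap.ker ((S' - 1).mulVecLin)) :=
        Submodule.finrank_lt_finrank_of_lt hlt
      have hmuS : 2 * (Fintype.card (Fin g ⊕ Fin g) -
          finrank ℂ (LinearMap.ker ((S - 1).mulVecLin))) ≤ mu S := by
        unfold mu; omega
      have hmuS' : mu S' ≤ 2 * (Fintype.card (Fin g ⊕ Fin g) -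
          finrank ℂ (LinearMap.ker ((S' - 1).mulVecLin))) + 1 := by
        unfold mu; split <;> omega
      have hrank_le : finrank ℂ (LinearMap.ker ((S - 1).mulVecLin)) <
          Fintype.card (Fin g ⊕ Fin g) := by
        have := Submodule.finrank_le (LinearMap.ker ((S' - 1).mulVecLin))
        rw [Module.finrank_fintype_fun_eq_card] at this
        omega
      have hdec : mu S' ≤ k := by omega
      have hP' := ih S' hSpS' hdec
      have hfinal : S = Tmat ℂ g v (-t) * S' := by
        rw [hS', ← mul_assoc, hT, Tmat_neg_mul, one_mul]
      rw [hfinal]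
      exact hP'.cons v (-t)

theorem gen {S : Matrix (Fin g ⊕ Fin g) (Fin g ⊕ Fin g) ℂ} (hS : Sp S) : IsProdT S :=
  gen_aux (mu S) S hS le_rfl

end S12

namespace S12
open MvPolynomial

lemma int_vanish_fin : ∀ (n : ℕ) (Q : MvPolynomial (Fin n) ℂ),
    (∀ z : Fin n → ℤ, eval (fun i => (z i : ℂ)) Q = 0) → Q = 0 := by
  intro n
  induction n with
  | zero =>
    intro Q h
    have h0 := h (fun i => 0)
    rw [eq_C_of_isEmpty Q] at h0 ⊢
    rw [eval_C] at h0
    rw [h0, map_zero]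
  | succ n ih =>
    intro Q h
    have hQ' : finSuccEquiv ℂ n Q = 0 := by
      apply Polynomial.ext
      intro j
      rw [Polynomial.coeff_zero]
      apply ih
      intro z
      have hpz : Polynomial.map (eval fun i => (z i : ℂ)) (finSuccEquiv ℂ n Q) = 0 := by
        apply Polynomial.eq_zero_of_infinite_isRoot
        apply Set.infinite_of_injective_forall_mem (f := fun y : ℤ => (y : ℂ))
        · intro a b hab
          exact Int.cast_injective hab
        · intro y
          show Polynomial.IsRoot _ ((y : ℤ) : ℂ)
          unfold Polynomial.IsRoot
          rw [← eval_eq_eval_mv_eval']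
          have hcons : (Fin.cons ((y : ℤ) : ℂ) (fun i => (z i : ℂ)) : Fin (n+1) → ℂ) =
              fun i => ((Fin.cons y z : Fin (n+1) → ℤ) i : ℂ) := by
            funext i
            refine Fin.cases ?_ ?_ i <;> simp
          rw [hcons]
          exact h (Fin.cons y z)
      have hcoef := Polynomial.ext_iff.mp hpz j
      rwa [Polynomial.coeff_map, Polynomial.coeff_zero] at hcoef
    have h2 := congrArg (finSuccEquiv ℂ n).symm hQ'
    rwa [AlgEquiv.symm_apply_apply, map_zero] at h2

lemma int_vanish {σ : Type*} [Fintype σ] [DecidableEq σ] (Q : MvPolynomial σ ℂ)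
    (h : ∀ z : σ → ℤ, eval (fun i => (z i : ℂ)) Q = 0) : Q = 0 := by
  obtain ⟨e⟩ := Fintype.truncEquivFin σ
  have h2 : rename e Q = 0 := by
    apply int_vanish_fin
    intro z
    rw [eval_rename]
    exact h (fun s => z (e s))
  apply (renameEquiv ℂ e).injective
  rw [map_zero, renameEquiv_apply]
  exact h2

end S12

namespace S12
open MvPolynomial
variable {g : ℕ}

lemma Tmat_map {R S : Type*} [CommRing R] [CommRing S] (f : R →+* S)
    (v : Fin g ⊕ Fin g → R) (t : R) :
    (Tmat R g v t).map f = Tmat S g (fun j => f (v j)) (f t) := by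
  ext i j
  simp only [Tmat, Matrix.map_apply, Matrix.add_apply, Matrix.smul_apply, vecMulVec_apply,
    Jm_mulVec, one_apply, smul_eq_mul]
  cases j <;>
    simp [apply_ite f, _root_.map_mul, _root_.map_one, map_neg, mul_assoc]

lemma Sp_list_prod {R : Type*} [CommRing R] (l : List (Matrix (Fin g ⊕ Fin g) (Fin g ⊕ Fin g) R))
    (h : ∀ A ∈ l, Sp A) : Sp l.prod := by
  induction l with
  | nil => exact Sp.one
  | cons a l ih =>
    rw [List.prod_cons]
    exact (h a List.mem_cons_self).mul (ih fun A hA => h A (List.mem_cons_of_mem a hA))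

end S12

namespace S12
open MvPolynomial

lemma aeval_eq_eval' {σ : Type*} (y : σ → ℂ) (p : MvPolynomial σ ℂ) :
    aeval y p = eval y p := by
  rw [← coe_aeval_eq_eval]; rfl

end S12

open MvPolynomial

/-- `Sp_{2g}(ℤ)` is Zariski-dense in `Sp_{2g, ℂ}`: any polynomial in
the matrix entries vanishing on all integral symplectic matrices vanishes on all
complex symplectic matrices. -/
theorem statement12 (g : ℕ) (hg : 1 ≤ g)
    (P : MvPolynomial ((Fin g ⊕ Fin g) × (Fin g ⊕ Fin g)) ℂ)
    (hvanish : ∀ M : Matrix (Fin g ⊕ Fin g) (Fin g ⊕ Fin g) ℤ,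
      M * Jm ℤ g * Mᵀ = Jm ℤ g →
      MvPolynomial.eval (fun q => (M q.1 q.2 : ℂ)) P = 0) :
    ∀ N : Matrix (Fin g ⊕ Fin g) (Fin g ⊕ Fin g) ℂ,
      N * Jm ℂ g * Nᵀ = Jm ℂ g →
      MvPolynomial.eval (fun q => N q.1 q.2) P = 0 := by
  intro N hN
  classical
  obtain ⟨L, hL⟩ := S12.gen (show S12.Sp N from hN)
  let Tpoly : Fin L.length → Matrix (Fin g ⊕ Fin g) (Fin g ⊕ Fin g)
      (MvPolynomial (Fin L.length × ((Fin g ⊕ Fin g) ⊕ Unit)) ℂ) :=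
    fun i => S12.Tmat _ g (fun j => X (i, Sum.inl j)) (X (i, Sum.inr ()))
  let G := (List.ofFn Tpoly).prod
  let Q := aeval (fun q : (Fin g ⊕ Fin g) × (Fin g ⊕ Fin g) => G q.1 q.2) P
  have hGmap : ∀ x : Fin L.length × ((Fin g ⊕ Fin g) ⊕ Unit) → ℂ,
      G.map (eval x) = (List.ofFn (fun i => S12.Tmat ℂ g (fun j => x (i, Sum.inl j))
        (x (i, Sum.inr ())))).prod := by
    intro x
    have h1 := map_list_prod ((eval x).mapMatrix) (List.ofFn Tpoly)
    rw [List.map_ofFn] at h1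
    calc G.map (eval x) = (eval x).mapMatrix G := by rw [RingHom.mapMatrix_apply]
      _ = (List.ofFn (⇑(eval x).mapMatrix ∘ Tpoly)).prod := h1
      _ = _ := by
          congr 1
          apply congrArg List.ofFn
          funext i
          show ((eval x).mapMatrix) (Tpoly i) = _
          rw [RingHom.mapMatrix_apply]
          show (S12.Tmat _ g _ _).map _ = _
          rw [S12.Tmat_map]
          simp
  have hQeval : ∀ x, eval x Q = eval (fun q => G.map (eval x) q.1 q.2) P := by
    intro x
    show eval x (aeval (fun q : (Fin g ⊕ Fin g) × (Fin g ⊕ Fin g) => G q.1 q.2) P) = _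
    rw [← S12.aeval_eq_eval', comp_aeval_apply]
    rw [show (fun q : (Fin g ⊕ Fin g) × (Fin g ⊕ Fin g) => (aeval x) (G q.1 q.2)) =
      fun q => G.map (eval x) q.1 q.2 from funext fun q => by rw [S12.aeval_eq_eval']; rfl]
    rw [S12.aeval_eq_eval']
  have hQ0 : Q = 0 := by
    apply S12.int_vanish
    intro z
    rw [hQeval (fun i => (z i : ℂ)), hGmap (fun i => (z i : ℂ))]
    have hcast : (List.ofFn (fun i => S12.Tmat ℂ g
          (fun j => ((z (i, Sum.inl j) : ℤ) : ℂ)) ((z (i, Sum.inr ()) : ℤ) : ℂ))).prod =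
        ((List.ofFn (fun i => S12.Tmat ℤ g (fun j => z (i, Sum.inl j))
          (z (i, Sum.inr ())))).prod).map ⇑(Int.castRingHom ℂ) := by
      have h1 := map_list_prod ((Int.castRingHom ℂ).mapMatrix)
        (List.ofFn (fun i => S12.Tmat ℤ g (fun j => z (i, Sum.inl j)) (z (i, Sum.inr ()))))
      rw [List.map_ofFn] at h1
      rw [← RingHom.mapMatrix_apply, h1]
      congr 1
      apply congrArg List.ofFn
      funext i
      show _ = ((Int.castRingHom ℂ).mapMatrix) (S12.Tmat ℤ g _ _)
      rw [RingHom.mapMatrix_apply]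
      show _ = (S12.Tmat ℤ g _ _).map _
      rw [S12.Tmat_map]
      rfl
    rw [hcast]
    have hSpZ : S12.Sp ((List.ofFn (fun i => S12.Tmat ℤ g (fun j => z (i, Sum.inl j))
        (z (i, Sum.inr ())))).prod) := by
      apply S12.Sp_list_prod
      intro A hA
      rw [List.mem_ofFn] at hA
      obtain ⟨i, rfl⟩ := hA
      exact S12.Sp.Tmat _ _
    exact hvanish _ hSpZ
  set x₀ : Fin L.length × ((Fin g ⊕ Fin g) ⊕ Unit) → ℂ :=
    fun p => Sum.elim ((L.get p.1).1) (fun _ => (L.get p.1).2) p.2 with hx₀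
  have hN' : G.map (eval x₀) = N := by
    rw [hGmap x₀, hL]
    congr 1
    conv_rhs => rw [← List.ofFn_get L, List.map_ofFn]
    rfl
  have hfin := hQeval x₀
  rw [hQ0, map_zero, hN'] at hfin
  exact hfin.symm
end
end

section
/- Let g ≥ 1, let τ ∈ H_g, and let p = (A B; 0 (Aᵀ)⁻¹) ∈ P_g(ℂ), i.e. A ∈ GL_g(ℂ) and ABᵀ = BAᵀ. Then the block matrix δ := (Aᵀ −Aᵀτ; −2πi·Bᵀ A⁻¹ + 2πi·Bᵀτ) belongs to Sp_{2g}(ℂ), its lower blocks satisfy j(δ,τ) = A⁻¹ (in particular j(δ,τ) is invertible, so τ ∈ U_δ), and p_{δ,τ} = p. -/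
open Matrix

noncomputable section

/-- The element `p_{σ,τ} = ((Cτ+D)⁻¹ −(2πi)⁻¹Cᵀ; 0 (Cτ+D)ᵀ)` of the Siegel
parabolic. -/
noncomputable def pdt {g : ℕ} (σ : Matrix (Fin g ⊕ Fin g) (Fin g ⊕ Fin g) ℂ)
    (τ : Matrix (Fin g) (Fin g) ℂ) : Matrix (Fin g ⊕ Fin g) (Fin g ⊕ Fin g) ℂ :=
  fromBlocks (jmat σ τ)⁻¹
    (-((2 * (Real.pi : ℂ) * Complex.I)⁻¹ • (σ.toBlocks₂₁)ᵀ))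
    0 (jmat σ τ)ᵀ

/-- given `τ ∈ H_g` and `p = (A B; 0 (Aᵀ)⁻¹) ∈ P_g(ℂ)`, the matrix
`δ = (Aᵀ −Aᵀτ; −2πi·Bᵀ A⁻¹ + 2πi·Bᵀτ)` is symplectic, satisfies `j(δ,τ) = A⁻¹`
(so `j(δ,τ)` is invertible, i.e. `τ ∈ U_δ`), and `p_{δ,τ} = p`. -/
theorem statement13 (g : ℕ) (hg : 1 ≤ g)
    (τ : Matrix (Fin g) (Fin g) ℂ) (hτ : τ ∈ SiegelUpperHalf g)
    (A B : Matrix (Fin g) (Fin g) ℂ) (hA : IsUnit A.det)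
    (hAB : A * Bᵀ = B * Aᵀ) :
    fromBlocks Aᵀ (-(Aᵀ * τ))
        (-((2 * (Real.pi : ℂ) * Complex.I) • Bᵀ))
        (A⁻¹ + (2 * (Real.pi : ℂ) * Complex.I) • (Bᵀ * τ)) ∈ SpSet g ∧
    jmat (fromBlocks Aᵀ (-(Aᵀ * τ))
        (-((2 * (Real.pi : ℂ) * Complex.I) • Bᵀ))
        (A⁻¹ + (2 * (Real.pi : ℂ) * Complex.I) • (Bᵀ * τ))) τ = A⁻¹ ∧
    IsUnit (jmat (fromBlocks Aᵀ (-(Aᵀ * τ))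
        (-((2 * (Real.pi : ℂ) * Complex.I) • Bᵀ))
        (A⁻¹ + (2 * (Real.pi : ℂ) * Complex.I) • (Bᵀ * τ))) τ).det ∧
    pdt (fromBlocks Aᵀ (-(Aᵀ * τ))
        (-((2 * (Real.pi : ℂ) * Complex.I) • Bᵀ))
        (A⁻¹ + (2 * (Real.pi : ℂ) * Complex.I) • (Bᵀ * τ))) τ =
      fromBlocks A B 0 (Aᵀ)⁻¹ := by
  set c : ℂ := 2 * (Real.pi : ℂ) * Complex.I with hc
  have hc0 : c ≠ 0 := by
    simp [hc, Real.pi_ne_zero, Complex.I_ne_zero, Complex.ofReal_ne_zero]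
  obtain ⟨hτs, -⟩ := hτ
  have hAinv : A⁻¹ * A = 1 := Matrix.nonsing_inv_mul A hA
  have hAinv' : A * A⁻¹ = 1 := Matrix.mul_nonsing_inv A hA
  have hAT : (A⁻¹)ᵀ = (Aᵀ)⁻¹ := Matrix.transpose_nonsing_inv A
  have hATinv : Aᵀ * (Aᵀ)⁻¹ = 1 := by
    rw [← hAT, ← Matrix.transpose_mul, hAinv, Matrix.transpose_one]
  -- the key symmetry fact
  have h1 : A * (Bᵀ * (Aᵀ)⁻¹) = B := by
    rw [← Matrix.mul_assoc, hAB, Matrix.mul_assoc, hATinv, Matrix.mul_one]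
  have hsym : A⁻¹ * B = Bᵀ * (Aᵀ)⁻¹ := by
    calc A⁻¹ * B = A⁻¹ * (A * (Bᵀ * (Aᵀ)⁻¹)) := by rw [h1]
    _ = Bᵀ * (Aᵀ)⁻¹ := by rw [← Matrix.mul_assoc, hAinv, Matrix.one_mul]
  have hj : jmat (fromBlocks Aᵀ (-(Aᵀ * τ)) (-(c • Bᵀ)) (A⁻¹ + c • (Bᵀ * τ))) τ
      = A⁻¹ := by
    simp [jmat, Matrix.smul_mul, add_comm]
  refine ⟨?_, hj, ?_, ?_⟩
  · show _ * Jm ℂ g * _ = Jm ℂ g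
    rw [Jm, Matrix.fromBlocks_transpose, Matrix.fromBlocks_multiply,
      Matrix.fromBlocks_multiply]
    rw [Matrix.fromBlocks_inj]
    refine ⟨?_, ?_, ?_, ?_⟩ <;>
      simp [Matrix.mul_smul, Matrix.smul_mul, Matrix.transpose_mul, hτs, hAT,
        Matrix.mul_add, Matrix.add_mul, Matrix.neg_mul, Matrix.mul_neg,
        hATinv, hAinv, hsym, Matrix.mul_assoc, smul_smul] <;>
      abel
  · rw [hj]
    exact A.isUnit_nonsing_inv_det hA
  · rw [pdt, hj, Matrix.nonsing_inv_nonsing_inv A hA, hAT]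
    rw [Matrix.fromBlocks_inj]
    refine ⟨rfl, ?_, rfl, rfl⟩
    simp [Matrix.toBlocks_fromBlocks₂₁, transpose_smul, smul_smul,
      inv_mul_cancel₀ hc0, ← hc]
end
end

section
/- Let g ≥ 1, let U_g(ℂ) := { (1_g Z; 0 1_g) : Z ∈ M_g(ℂ), Zᵀ = Z } ⊆ Sp_{2g}(ℂ), and regard Sp_{2g}(ℤ) as a subset of Sp_{2g}(ℂ). Then the set Sp_{2g}(ℤ)·U_g(ℂ) = { γ·u : γ ∈ Sp_{2g}(ℤ), u ∈ U_g(ℂ) } is a closed subset of Sp_{2g}(ℂ) for the analytic topology (the topology induced from the standard topology on the space of complex 2g×2g matrices). Equivalently, the image of U_g(ℂ) in the quotient Sp_{2g}(ℤ)\Sp_{2g}(ℂ) is closed; under the identification of B_g(ℂ) with an open submanifold of this quotient, this says that the image of the map φ_g : H_g → B_g(ℂ) is closed for the analytic topology. -/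
open Matrix

noncomputable section

/-- Any set of complex matrices all of whose elements have integer entries is closed. -/
lemma isClosed_int_matrices {ι κ : Type*} [Fintype ι] [Fintype κ]
    (t : Set (Matrix ι κ ℂ)) (h : ∀ B ∈ t, ∀ i j, ∃ n : ℤ, B i j = (n : ℂ)) :
    IsClosed t := by
  refine isClosed_of_closure_subset fun x hx => ?_
  have hcont : ∀ (i : ι) (j : κ), Continuous fun y : Matrix ι κ ℂ => y i j :=
    fun i j => continuous_id.matrix_elem i j
  have hint : ∀ i j, ∃ n : ℤ, x i j = (n : ℂ) := by
    intro i j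
    have h1 : closure t ⊆ (fun y : Matrix ι κ ℂ => y i j) ⁻¹' Set.range ((↑) : ℤ → ℂ) :=
      closure_minimal (fun B hB => (h B hB i j).imp fun n hn => hn.symm)
        (Complex.isClosed_range_intCast.preimage (hcont i j))
    obtain ⟨n, hn⟩ := h1 hx
    exact ⟨n, hn.symm⟩
  choose x0 hx0 using hint
  set V : Set (Matrix ι κ ℂ) :=
    ⋂ i, ⋂ j, (fun y : Matrix ι κ ℂ => y i j) ⁻¹' Metric.ball (x i j) (1/2) with hVdef
  have hVopen : IsOpen V := isOpen_iInter_of_finite fun i =>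
    isOpen_iInter_of_finite fun j => Metric.isOpen_ball.preimage (hcont i j)
  have hxV : x ∈ V := by
    simp only [hVdef, Set.mem_iInter, Set.mem_preimage, Metric.mem_ball]
    intro i j
    simp
  obtain ⟨y, hyV, hyt⟩ := mem_closure_iff.mp hx V hVopen hxV
  have hyx : y = x := by
    ext i j
    obtain ⟨m, hm⟩ := h y hyt i j
    have hd : dist (y i j) (x i j) < 1/2 := by
      have := Set.mem_iInter.mp (Set.mem_iInter.mp hyV i) j
      simpa using this
    rw [hm, hx0 i j] at hd ⊢
    rw [Complex.isometry_intCast.dist_eq, Int.dist_eq] at hd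
    have h3 : ((|m - x0 i j| : ℤ) : ℝ) < 1/2 := by
      rw [Int.cast_abs, Int.cast_sub]; exact hd
    have h4 : ((|m - x0 i j| : ℤ) : ℝ) < 1 := h3.trans (by norm_num)
    have h5 : |m - x0 i j| < 1 := by exact_mod_cast h4
    have : m = x0 i j := by
      rcases abs_lt.mp h5 with ⟨h6, h7⟩
      omega
    exact_mod_cast congrArg (fun k : ℤ => (k : ℂ)) this
  rwa [← hyx]

lemma Jm_map (g : ℕ) : (Jm ℤ g).map (fun a => (a : ℂ)) = Jm ℂ g := by
  ext i j
  cases i <;> cases j <;>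
    simp [Jm, Matrix.map_apply, fromBlocks, Matrix.one_apply, apply_ite]

lemma Jm_eq_neg_J (g : ℕ) : Jm ℂ g = -Matrix.J (Fin g) ℂ := by
  simp [Jm, Matrix.J, fromBlocks_neg]

lemma mem_sympl_iff {g : ℕ} (M : Matrix (Fin g ⊕ Fin g) (Fin g ⊕ Fin g) ℂ) :
    M * Jm ℂ g * Mᵀ = Jm ℂ g ↔ M ∈ Matrix.symplecticGroup (Fin g) ℂ := by
  rw [SymplecticGroup.mem_iff, Jm_eq_neg_J, Matrix.mul_neg, Matrix.neg_mul, neg_inj]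

lemma sub_left_mul_unipotent {g : ℕ}
    (A : Matrix (Fin g ⊕ Fin g) (Fin g ⊕ Fin g) ℂ) (Z : Matrix (Fin g) (Fin g) ℂ) :
    (A * fromBlocks 1 Z 0 1).submatrix id Sum.inl = A.submatrix id Sum.inl := by
  have h1 : (fromBlocks (1 : Matrix (Fin g) (Fin g) ℂ) Z 0 1).submatrix id Sum.inl
      = (1 : Matrix (Fin g ⊕ Fin g) (Fin g ⊕ Fin g) ℂ).submatrix id Sum.inl := by
    ext i j
    cases i <;> simp [fromBlocks, Matrix.one_apply]
  rw [submatrix_mul A (fromBlocks 1 Z 0 1) id id Sum.inl Function.bijective_id, h1,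
    ← submatrix_mul A 1 id id Sum.inl Function.bijective_id, mul_one]

/-- the set `Sp_{2g}(ℤ)·U_g(ℂ)` of products of an integral symplectic
matrix with a unipotent matrix `(1 Z; 0 1)`, `Z` symmetric, is closed in
`Sp_{2g}(ℂ)` for the analytic topology. -/
theorem statement16 (g : ℕ) (hg : 1 ≤ g) :
    IsClosed {m : (SpSet g : Set (Matrix (Fin g ⊕ Fin g) (Fin g ⊕ Fin g) ℂ)) |
      ∃ (γZ : Matrix (Fin g ⊕ Fin g) (Fin g ⊕ Fin g) ℤ)
        (Z : Matrix (Fin g) (Fin g) ℂ),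
        γZ * Jm ℤ g * γZᵀ = Jm ℤ g ∧ Zᵀ = Z ∧
        (m : Matrix (Fin g ⊕ Fin g) (Fin g ⊕ Fin g) ℂ) =
          γZ.map (fun a => (a : ℂ)) * fromBlocks 1 Z 0 1} := by
  classical
  set T : Set (Matrix (Fin g ⊕ Fin g) (Fin g) ℂ) :=
    {N | ∃ γ : Matrix (Fin g ⊕ Fin g) (Fin g ⊕ Fin g) ℤ,
      γ * Jm ℤ g * γᵀ = Jm ℤ g ∧
      (γ.map (fun a => (a : ℂ))).submatrix id Sum.inl = N} with hTdef
  have hTclosed : IsClosed T := by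
    apply isClosed_int_matrices
    rintro B ⟨γ, -, rfl⟩ i j
    exact ⟨γ i (Sum.inl j), rfl⟩
  have key : {m : (SpSet g : Set (Matrix (Fin g ⊕ Fin g) (Fin g ⊕ Fin g) ℂ)) |
      ∃ (γZ : Matrix (Fin g ⊕ Fin g) (Fin g ⊕ Fin g) ℤ)
        (Z : Matrix (Fin g) (Fin g) ℂ),
        γZ * Jm ℤ g * γZᵀ = Jm ℤ g ∧ Zᵀ = Z ∧
        (m : Matrix (Fin g ⊕ Fin g) (Fin g ⊕ Fin g) ℂ) =
          γZ.map (fun a => (a : ℂ)) * fromBlocks 1 Z 0 1}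
      = (fun m : (SpSet g : Set (Matrix (Fin g ⊕ Fin g) (Fin g ⊕ Fin g) ℂ)) =>
          (m : Matrix (Fin g ⊕ Fin g) (Fin g ⊕ Fin g) ℂ).submatrix id Sum.inl) ⁻¹' T := by
    ext m
    constructor
    · rintro ⟨γ, Z, hγ, hZ, heq⟩
      refine ⟨γ, hγ, ?_⟩
      show (γ.map fun a => (a : ℂ)).submatrix id Sum.inl
        = ((m : Matrix (Fin g ⊕ Fin g) (Fin g ⊕ Fin g) ℂ)).submatrix id Sum.inl
      rw [heq, sub_left_mul_unipotent]
    · rintro ⟨γ, hγ, hsub0⟩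
      have hsub : (γ.map fun a => (a : ℂ)).submatrix id Sum.inl
          = ((m : Matrix (Fin g ⊕ Fin g) (Fin g ⊕ Fin g) ℂ)).submatrix id Sum.inl := hsub0
      -- `c` is the complex symplectic matrix corresponding to `γ`
      set c : Matrix (Fin g ⊕ Fin g) (Fin g ⊕ Fin g) ℂ := γ.map (fun a => (a : ℂ)) with hcdef
      have hmul : ∀ M N : Matrix (Fin g ⊕ Fin g) (Fin g ⊕ Fin g) ℤ,
          ((M * N).map (fun a : ℤ => (a : ℂ)))
            = M.map (fun a : ℤ => (a : ℂ)) * N.map (fun a : ℤ => (a : ℂ)) :=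
        fun M N => Matrix.map_mul (f := Int.castRingHom ℂ)
      have hc : c * Jm ℂ g * cᵀ = Jm ℂ g := by
        have h0 := congrArg (fun M : Matrix (Fin g ⊕ Fin g) (Fin g ⊕ Fin g) ℤ =>
          M.map (fun a : ℤ => (a : ℂ))) hγ
        simp only [hmul, Matrix.transpose_map, Jm_map] at h0
        rw [hcdef]
        exact h0
      have hcG : c ∈ Matrix.symplecticGroup (Fin g) ℂ := (mem_sympl_iff c).mp hc
      have hmG : (m : Matrix (Fin g ⊕ Fin g) (Fin g ⊕ Fin g) ℂ) ∈
          Matrix.symplecticGroup (Fin g) ℂ := (mem_sympl_iff _).mp m.2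
      set gC : Matrix.symplecticGroup (Fin g) ℂ := ⟨c, hcG⟩ with hgCdef
      set mM : Matrix.symplecticGroup (Fin g) ℂ := ⟨_, hmG⟩ with hmMdef
      set u : Matrix.symplecticGroup (Fin g) ℂ := gC⁻¹ * mM with hudef
      set U : Matrix (Fin g ⊕ Fin g) (Fin g ⊕ Fin g) ℂ :=
        (u : Matrix (Fin g ⊕ Fin g) (Fin g ⊕ Fin g) ℂ) with hUdef
      have hmu : (m : Matrix (Fin g ⊕ Fin g) (Fin g ⊕ Fin g) ℂ) = c * U := by
        have h1 : gC * u = mM := by rw [hudef, mul_inv_cancel_left]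
        have := congrArg (Subtype.val) h1
        simpa [hUdef, hgCdef, hmMdef] using this.symm
      have hinv : ((gC⁻¹ : Matrix.symplecticGroup (Fin g) ℂ) : Matrix (Fin g ⊕ Fin g) (Fin g ⊕ Fin g) ℂ) * c = 1 := by
        exact congrArg Subtype.val (inv_mul_cancel gC)
      have hUcoe : U = ((gC⁻¹ : Matrix.symplecticGroup (Fin g) ℂ) : Matrix (Fin g ⊕ Fin g) (Fin g ⊕ Fin g) ℂ) *
          (m : Matrix (Fin g ⊕ Fin g) (Fin g ⊕ Fin g) ℂ) := rfl
      have hU : U.submatrix id Sum.inl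
          = (1 : Matrix (Fin g ⊕ Fin g) (Fin g ⊕ Fin g) ℂ).submatrix id Sum.inl := by
        rw [hUcoe, submatrix_mul _ _ id id Sum.inl Function.bijective_id, ← hsub,
          ← submatrix_mul _ _ id id Sum.inl Function.bijective_id, hinv]
      have hUa : ∀ a j, U a (Sum.inl j)
          = (1 : Matrix (Fin g ⊕ Fin g) (Fin g ⊕ Fin g) ℂ) a (Sum.inl j) :=
        fun a j => congrFun (congrFun hU a) j
      have hB11 : U.toBlocks₁₁ = 1 := by
        ext i j
        simpa [Matrix.toBlocks₁₁, Matrix.one_apply] using hUa (Sum.inl i) j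
      have hB21 : U.toBlocks₂₁ = 0 := by
        ext i j
        simpa [Matrix.toBlocks₂₁, Matrix.one_apply] using hUa (Sum.inr i) j
      have hUblocks : U = fromBlocks 1 U.toBlocks₁₂ 0 U.toBlocks₂₂ := by
        conv_lhs => rw [← fromBlocks_toBlocks U]
        rw [hB11, hB21]
      have hUsymp : U * Jm ℂ g * Uᵀ = Jm ℂ g := (mem_sympl_iff U).mpr u.2
      rw [hUblocks] at hUsymp
      rw [Jm, fromBlocks_transpose, fromBlocks_multiply, fromBlocks_multiply] at hUsymp
      simp only [Matrix.mul_zero, Matrix.mul_one, Matrix.zero_mul, Matrix.one_mul,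
        Matrix.mul_neg, Matrix.neg_mul, add_zero, zero_add, transpose_one, transpose_zero,
        Matrix.mul_one, neg_zero] at hUsymp
      rw [fromBlocks_inj] at hUsymp
      obtain ⟨h11, h12, h21, h22⟩ := hUsymp
      -- h12 should give `U.toBlocks₂₂ᵀ = 1`, h11 symmetry of `U.toBlocks₁₂`
      have hD : U.toBlocks₂₂ = 1 := by
        have := congrArg Matrix.transpose h12
        simpa using this
      have hBsymm : (U.toBlocks₁₂)ᵀ = U.toBlocks₁₂ := by
        have := congrArg (fun M => U.toBlocks₁₂ + M) h11
        simpa [← add_assoc] using this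
      have hU2 : U = fromBlocks 1 U.toBlocks₁₂ 0 1 := hUblocks.trans (by rw [hD])
      set B := U.toBlocks₁₂ with hBdef
      refine ⟨γ, B, hγ, hBsymm, ?_⟩
      rw [hmu, hU2, hcdef]
  rw [key]
  exact hTclosed.preimage (continuous_subtype_val.matrix_submatrix id Sum.inl)
end
end

section
/- Let F be a totally real number field of degree g over ℚ, i.e. every ring homomorphism F → ℂ takes values in ℝ, and let σ₁, …, σ_g : F → ℝ be its g distinct real embeddings. Let τ₁, …, τ_g ∈ ℂ with Im τⱼ > 0 for every j. Then for all x, y, x', y' ∈ F, ∑_{j=1}^{g} (1/Im τⱼ) · Im( conj(σⱼ(x) + τⱼσⱼ(y)) · (σⱼ(x') + τⱼσⱼ(y')) ) = Tr_{F/ℚ}(x·y' − y·x'), where the trace Tr_{F/ℚ} (a rational number) is regarded as a real number. -/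
open scoped BigOperators

/-- let `F` be a totally real number field of degree `g` with distinct
real embeddings `σ₁, …, σ_g`, and `τ₁, …, τ_g` complex numbers with positive
imaginary parts. Then for all `x, y, x', y' ∈ F`,
`∑ⱼ (1/Im τⱼ) Im(conj(σⱼx + τⱼσⱼy)(σⱼx' + τⱼσⱼy')) = Tr_{F/ℚ}(xy' − yx')`. -/
theorem statement19 (F : Type*) [Field F] [NumberField F] (g : ℕ)
    (hdeg : Module.finrank ℚ F = g)
    (htotreal : ∀ φ : F →+* ℂ, ∀ z : F, (φ z).im = 0)
    (σ : Fin g → (F →+* ℝ)) (hσ : Function.Injective σ)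
    (τ : Fin g → ℂ) (hτ : ∀ j, 0 < (τ j).im)
    (x y x' y' : F) :
    ∑ j, (1 / (τ j).im) *
        Complex.im ((starRingEnd ℂ) ((σ j x : ℂ) + τ j * (σ j y : ℂ)) *
          ((σ j x' : ℂ) + τ j * (σ j y' : ℂ))) =
      ((Algebra.trace ℚ F (x * y' - y * x') : ℚ) : ℝ) := by
  -- Step 1: each summand is `σ j (x*y' - y*x')`.
  have hterm : ∀ j, (1 / (τ j).im) *
        Complex.im ((starRingEnd ℂ) ((σ j x : ℂ) + τ j * (σ j y : ℂ)) *
          ((σ j x' : ℂ) + τ j * (σ j y' : ℂ))) = σ j (x * y' - y * x') := by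
    intro j
    have hne : (τ j).im ≠ 0 := (hτ j).ne'
    simp only [map_sub, map_mul, Complex.mul_im, Complex.add_im, Complex.add_re,
      Complex.conj_re, Complex.conj_im, Complex.ofReal_re, Complex.ofReal_im,
      Complex.mul_re]
    field_simp
    ring
  rw [Finset.sum_congr rfl fun j _ => hterm j]
  -- Step 2: the sum over the `σ j` is the trace.
  set z := x * y' - y * x'
  -- embeddings into ℂ coming from σ
  let e : Fin g → (F →+* ℂ) := fun j => Complex.ofRealHom.comp (σ j)
  have he_inj : Function.Injective e := by
    intro i k h
    apply hσ
    ext a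
    have h2 := RingHom.congr_fun h a
    simp only [e, RingHom.comp_apply, Complex.ofRealHom_eq_coe] at h2
    exact_mod_cast h2
  have hcard : Fintype.card (F →+* ℂ) = g := by
    rw [NumberField.Embeddings.card F ℂ, hdeg]
  have he_bij : Function.Bijective e :=
    (Fintype.bijective_iff_injective_and_card e).2 ⟨he_inj, by simp [hcard]⟩
  have htr : ((Algebra.trace ℚ F z : ℚ) : ℂ) = ∑ φ : F →+* ℂ, φ z := by
    have := trace_eq_sum_embeddings (E := ℂ) (K := ℚ) (L := F) (x := z)
    rw [show (algebraMap ℚ ℂ) (Algebra.trace ℚ F z) = ((Algebra.trace ℚ F z : ℚ) : ℂ) from rfl]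
      at this
    rw [this, ← Equiv.sum_comp (RingHom.equivRatAlgHom (R := F) (S := ℂ))]
    rfl
  have hsum : ∑ φ : F →+* ℂ, φ z = ∑ j, e j z := (Fintype.sum_bijective e he_bij _ _ fun j => rfl).symm
  have : ((Algebra.trace ℚ F z : ℚ) : ℂ) = ∑ j, ((σ j z : ℝ) : ℂ) := by
    rw [htr, hsum]; rfl
  have hre := congrArg Complex.re this
  simpa using hre.symm
end
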